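/- arXiv:1206.0463 — 4 statements merged into one kernel-verified Lean document; each statement's English description precedes it below -/
import Mathlib

section
/- Let (M, ρ, μ) be a doubling metric measure space with exponent d. If σ > d, then for all x, y ∈ M and δ > 0: ∫_M (1+ρ(x,u)/δ)^{-σ} (1+ρ(y,u)/δ)^{-σ} dμ(u) ≤ 2^σ (2^{-d} − 2^{-σ})^{-1} (μ(B(x,δ)) + μ(B(y,δ))) (1 + ρ(x,y)/δ)^{-σ}. -/
open MeasureTheory Metric ENNReal

lemma two_peaks_pointwise {a b c σ : ℝ} (ha : 1 ≤ a) (hb : 1 ≤ b) (hc : 0 < c)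
    (hcab : c ≤ a + b) (hσ : 0 < σ) :
    a ^ (-σ) * b ^ (-σ) ≤ 2 ^ σ * c ^ (-σ) * (a ^ (-σ) + b ^ (-σ)) := by
  have key : ∀ p q : ℝ, 1 ≤ p → 1 ≤ q → p ≤ q → c ≤ p + q →
      p ^ (-σ) * q ^ (-σ) ≤ 2 ^ σ * c ^ (-σ) * (p ^ (-σ) + q ^ (-σ)) := by
    intro p q hp hq hpq hcpq
    have hp0 : (0:ℝ) < p := lt_of_lt_of_le one_pos hp
    have hq0 : (0:ℝ) < q := lt_of_lt_of_le one_pos hq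
    have hc2q : c ≤ 2 * q := by linarith
    have h1 : (2 * q) ^ (-σ) ≤ c ^ (-σ) :=
      Real.rpow_le_rpow_of_nonpos hc hc2q (by linarith)
    have h2 : (2 * q) ^ (-σ) = 2 ^ (-σ) * q ^ (-σ) :=
      Real.mul_rpow (by norm_num) hq0.le
    have h4 : (2:ℝ) ^ σ * 2 ^ (-σ) = 1 := by
      rw [← Real.rpow_add (by norm_num)]; simp
    have hqσ : (0:ℝ) < q ^ (-σ) := Real.rpow_pos_of_pos hq0 _
    have hpσ : (0:ℝ) < p ^ (-σ) := Real.rpow_pos_of_pos hp0 _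
    have hcσ : (0:ℝ) < c ^ (-σ) := Real.rpow_pos_of_pos hc _
    have h2σ : (0:ℝ) < (2:ℝ) ^ σ := Real.rpow_pos_of_pos (by norm_num) _
    have h3 : q ^ (-σ) * p ^ (-σ) ≤ 2 ^ σ * c ^ (-σ) * p ^ (-σ) := by
      have hh := mul_le_mul_of_nonneg_right h1 hpσ.le
      rw [h2] at hh
      calc q ^ (-σ) * p ^ (-σ) = 2 ^ σ * (2 ^ (-σ) * q ^ (-σ) * p ^ (-σ)) := by
            rw [show (2:ℝ) ^ σ * (2 ^ (-σ) * q ^ (-σ) * p ^ (-σ))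
                = (2 ^ σ * 2 ^ (-σ)) * (q ^ (-σ) * p ^ (-σ)) from by ring, h4, one_mul]
        _ ≤ 2 ^ σ * (c ^ (-σ) * p ^ (-σ)) := by
            exact mul_le_mul_of_nonneg_left hh h2σ.le
        _ = 2 ^ σ * c ^ (-σ) * p ^ (-σ) := by ring
    have h6 : 2 ^ σ * c ^ (-σ) * p ^ (-σ) ≤ 2 ^ σ * c ^ (-σ) * (p ^ (-σ) + q ^ (-σ)) := by
      gcongr
      linarith
    nlinarith [h3, h6]
  rcases le_total a b with h | h
  · exact key a b ha hb h hcab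
  · have := key b a hb ha h (by linarith)
    linarith

lemma doubling_iter {M : Type*} [MetricSpace M] [MeasurableSpace M]
    (μ : Measure M) (d δ : ℝ) (hδ : 0 < δ)
    (hdoub : ∀ (x : M) (r : ℝ), 0 < r →
      μ (ball x (2 * r)) ≤ ENNReal.ofReal ((2 : ℝ) ^ d) * μ (ball x r))
    (x : M) : ∀ n : ℕ, μ (ball x ((2:ℝ) ^ n * δ)) ≤
      (ENNReal.ofReal ((2 : ℝ) ^ d)) ^ n * μ (ball x δ) := by
  intro n
  induction n with
  | zero => simp
  | succ n ih =>
    have h2 : ((2:ℝ) ^ (n+1) * δ) = 2 * ((2:ℝ) ^ n * δ) := by ring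
    rw [h2]
    calc μ (ball x (2 * ((2:ℝ) ^ n * δ)))
        ≤ ENNReal.ofReal ((2 : ℝ) ^ d) * μ (ball x ((2:ℝ) ^ n * δ)) :=
          hdoub x _ (by positivity)
      _ ≤ ENNReal.ofReal ((2 : ℝ) ^ d) * ((ENNReal.ofReal ((2 : ℝ) ^ d)) ^ n * μ (ball x δ)) :=
          mul_le_mul_right ih _
      _ = (ENNReal.ofReal ((2 : ℝ) ^ d)) ^ (n+1) * μ (ball x δ) := by ring

lemma single_peak {M : Type*} [MetricSpace M] [MeasurableSpace M]
    [OpensMeasurableSpace M]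
    (μ : Measure M) (d : ℝ) (hd : 0 < d)
    (hdoub : ∀ (x : M) (r : ℝ), 0 < r →
      μ (ball x (2 * r)) ≤ ENNReal.ofReal ((2 : ℝ) ^ d) * μ (ball x r))
    (σ δ : ℝ) (hσ : d < σ) (hδ : 0 < δ) (x : M) :
    ∫⁻ u, ENNReal.ofReal ((1 + dist x u / δ) ^ (-σ)) ∂μ
      ≤ ENNReal.ofReal (((2 : ℝ) ^ (-d) - (2 : ℝ) ^ (-σ))⁻¹) * μ (ball x δ) := by
  set A : ℕ → Set M := fun k =>
    {u | (2:ℝ) ^ (k:ℝ) ≤ 1 + dist x u / δ} ∩ {u | 1 + dist x u / δ < (2:ℝ) ^ ((k:ℝ)+1)}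
    with hA
  have hcont : Continuous fun u : M => 1 + dist x u / δ :=
    continuous_const.add ((continuous_const.dist continuous_id).div_const δ)
  have hAm : ∀ k, MeasurableSet (A k) := fun k =>
    (hcont.measurable measurableSet_Ici).inter (hcont.measurable measurableSet_Iio)
  -- pointwise domination
  have hpt : ∀ u, ENNReal.ofReal ((1 + dist x u / δ) ^ (-σ))
      ≤ ∑' k : ℕ, (A k).indicator (fun _ => ENNReal.ofReal ((2:ℝ) ^ (-(k:ℝ) * σ))) u := by
    intro u
    set s : ℝ := 1 + dist x u / δ with hs
    have hs1 : (1:ℝ) ≤ s := by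
      rw [hs]
      have h := dist_nonneg (x := x) (y := u)
      have : 0 ≤ dist x u / δ := div_nonneg h hδ.le
      linarith
    have hs0 : (0:ℝ) < s := lt_of_lt_of_le one_pos hs1
    set k : ℕ := ⌊Real.logb 2 s⌋₊ with hk
    have hlog0 : 0 ≤ Real.logb 2 s := Real.logb_nonneg (by norm_num) hs1
    have hrlog : (2:ℝ) ^ (Real.logb 2 s) = s := Real.rpow_logb (by norm_num) (by norm_num) hs0
    have h1 : (2:ℝ) ^ (k:ℝ) ≤ s := by
      rw [← hrlog]
      exact Real.rpow_le_rpow_of_exponent_le one_le_two (Nat.floor_le hlog0)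
    have h2 : s < (2:ℝ) ^ ((k:ℝ)+1) := by
      conv_lhs => rw [← hrlog]
      exact Real.rpow_lt_rpow_of_exponent_lt one_lt_two (Nat.lt_floor_add_one _)
    have hu : u ∈ A k := ⟨h1, h2⟩
    have hb : ENNReal.ofReal (s ^ (-σ)) ≤ ENNReal.ofReal ((2:ℝ) ^ (-(k:ℝ) * σ)) := by
      apply ENNReal.ofReal_le_ofReal
      have : ((2:ℝ) ^ (k:ℝ)) ^ (-σ) = (2:ℝ) ^ (-(k:ℝ) * σ) := by
        rw [← Real.rpow_mul (by norm_num)]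
        ring_nf
      rw [← this]
      exact Real.rpow_le_rpow_of_nonpos (by positivity) h1 (by linarith)
    refine hb.trans ?_
    have := ENNReal.le_tsum (f := fun k : ℕ =>
      (A k).indicator (fun _ => ENNReal.ofReal ((2:ℝ) ^ (-(k:ℝ) * σ))) u) k
    rwa [Set.indicator_of_mem hu] at this
  have hAk_sub : ∀ k : ℕ, A k ⊆ ball x ((2:ℝ) ^ (k+1) * δ) := by
    intro k u hu
    have h2 : 1 + dist x u / δ < (2:ℝ) ^ ((k:ℝ)+1) := hu.2
    have hcast : (2:ℝ) ^ ((k:ℝ)+1) = (2:ℝ) ^ (k+1 : ℕ) := by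
      rw [← Real.rpow_natCast 2 (k+1)]
      push_cast; ring_nf
    have hd0 : 0 ≤ dist x u := dist_nonneg
    rw [mem_ball, dist_comm]
    have : dist x u / δ < (2:ℝ) ^ (k+1 : ℕ) := by
      rw [← hcast]; linarith
    calc dist x u = (dist x u / δ) * δ := by field_simp
      _ < (2:ℝ) ^ (k+1 : ℕ) * δ := by
          exact mul_lt_mul_of_pos_right this hδ
  have hAk_meas : ∀ k : ℕ, μ (A k) ≤ (ENNReal.ofReal ((2:ℝ)^d)) ^ (k+1) * μ (ball x δ) :=
    fun k => (measure_mono (hAk_sub k)).trans (doubling_iter μ d δ hδ hdoub x (k+1))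
  have hr1 : (2:ℝ) ^ (d - σ) < 1 :=
    Real.rpow_lt_one_of_one_lt_of_neg one_lt_two (by linarith)
  have hterm : ∀ k : ℕ, ENNReal.ofReal ((2:ℝ) ^ (-(k:ℝ) * σ)) * (ENNReal.ofReal ((2:ℝ)^d)) ^ (k+1)
      = ENNReal.ofReal ((2:ℝ)^d) * (ENNReal.ofReal ((2:ℝ)^(d-σ))) ^ k := by
    intro k
    rw [← ENNReal.ofReal_pow (by positivity), ← ENNReal.ofReal_pow (by positivity),
        ← ENNReal.ofReal_mul (by positivity), ← ENNReal.ofReal_mul (by positivity)]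
    congr 1
    rw [← Real.rpow_natCast ((2:ℝ)^d) (k+1), ← Real.rpow_natCast ((2:ℝ)^(d-σ)) k,
        ← Real.rpow_mul (by norm_num), ← Real.rpow_mul (by norm_num),
        ← Real.rpow_add (by norm_num), ← Real.rpow_add (by norm_num)]
    congr 1
    push_cast; ring
  have hconst : ∑' k : ℕ, ENNReal.ofReal ((2:ℝ) ^ (-(k:ℝ) * σ)) * (ENNReal.ofReal ((2:ℝ)^d)) ^ (k+1)
      = ENNReal.ofReal (((2 : ℝ) ^ (-d) - (2 : ℝ) ^ (-σ))⁻¹) := by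
    simp_rw [hterm]
    rw [ENNReal.tsum_mul_left, ENNReal.tsum_geometric]
    have hsub : (1 : ℝ≥0∞) - ENNReal.ofReal ((2:ℝ)^(d-σ)) = ENNReal.ofReal (1 - (2:ℝ)^(d-σ)) := by
      rw [← ENNReal.ofReal_one, ← ENNReal.ofReal_sub _ (by positivity)]
    rw [hsub, ← ENNReal.ofReal_inv_of_pos (by linarith),
        ← ENNReal.ofReal_mul (by positivity)]
    congr 1
    have hmul : (2:ℝ)^(-d) * (2:ℝ)^(d-σ) = (2:ℝ)^(-σ) := by
      rw [← Real.rpow_add (by norm_num), show -d + (d - σ) = -σ by ring]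
    have h1 : (2:ℝ)^(-d) - (2:ℝ)^(-σ) = (2:ℝ)^(-d) * (1 - (2:ℝ)^(d-σ)) := by
      rw [mul_sub, mul_one, hmul]
    rw [h1, mul_inv, Real.rpow_neg (by norm_num), inv_inv]
  calc ∫⁻ u, ENNReal.ofReal ((1 + dist x u / δ) ^ (-σ)) ∂μ
      ≤ ∫⁻ u, ∑' k : ℕ, (A k).indicator (fun _ => ENNReal.ofReal ((2:ℝ) ^ (-(k:ℝ) * σ))) u ∂μ :=
        lintegral_mono hpt
    _ = ∑' k : ℕ, ∫⁻ u, (A k).indicator (fun _ => ENNReal.ofReal ((2:ℝ) ^ (-(k:ℝ) * σ))) u ∂μ :=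
        lintegral_tsum fun k => (measurable_const.indicator (hAm k)).aemeasurable
    _ = ∑' k : ℕ, ENNReal.ofReal ((2:ℝ) ^ (-(k:ℝ) * σ)) * μ (A k) :=
        tsum_congr fun k => lintegral_indicator_const (hAm k) _
    _ ≤ ∑' k : ℕ, ENNReal.ofReal ((2:ℝ) ^ (-(k:ℝ) * σ)) *
          ((ENNReal.ofReal ((2:ℝ)^d)) ^ (k+1) * μ (ball x δ)) :=
        ENNReal.tsum_le_tsum fun k => mul_le_mul_right (hAk_meas k) _
    _ = (∑' k : ℕ, ENNReal.ofReal ((2:ℝ) ^ (-(k:ℝ) * σ)) * (ENNReal.ofReal ((2:ℝ)^d)) ^ (k+1))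
          * μ (ball x δ) := by
        simp_rw [← mul_assoc]
        exact ENNReal.tsum_mul_right
    _ = ENNReal.ofReal (((2 : ℝ) ^ (-d) - (2 : ℝ) ^ (-σ))⁻¹) * μ (ball x δ) := by rw [hconst]

theorem lintegral_two_peaks {M : Type*} [MetricSpace M] [MeasurableSpace M]
    [OpensMeasurableSpace M]
    (μ : Measure M) (d : ℝ) (hd : 0 < d)
    (hpos : ∀ (x : M) (r : ℝ), 0 < r → 0 < μ (ball x r))
    (hfin : ∀ (x : M) (r : ℝ), 0 < r → μ (ball x r) < ⊤)
    (hdoub : ∀ (x : M) (r : ℝ), 0 < r →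
      μ (ball x (2 * r)) ≤ ENNReal.ofReal ((2 : ℝ) ^ d) * μ (ball x r))
    (σ δ : ℝ) (hσ : d < σ) (hδ : 0 < δ) (x y : M) :
    ∫⁻ u, ENNReal.ofReal ((1 + dist x u / δ) ^ (-σ) * (1 + dist y u / δ) ^ (-σ)) ∂μ
      ≤ ENNReal.ofReal ((2 : ℝ) ^ σ * ((2 : ℝ) ^ (-d) - (2 : ℝ) ^ (-σ))⁻¹)
          * (μ (ball x δ) + μ (ball y δ))
          * ENNReal.ofReal ((1 + dist x y / δ) ^ (-σ)) := by
  have hσ0 : 0 < σ := lt_trans hd hσ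
  set c : ℝ := 1 + dist x y / δ with hc
  have hc1 : (1:ℝ) ≤ c := by
    rw [hc]
    have := div_nonneg (dist_nonneg (x := x) (y := y)) hδ.le; linarith
  have hc0 : (0:ℝ) < c := lt_of_lt_of_le one_pos hc1
  -- pointwise bound
  have hpt : ∀ u, ENNReal.ofReal ((1 + dist x u / δ) ^ (-σ) * (1 + dist y u / δ) ^ (-σ))
      ≤ ENNReal.ofReal ((2:ℝ) ^ σ * c ^ (-σ)) *
        (ENNReal.ofReal ((1 + dist x u / δ) ^ (-σ)) + ENNReal.ofReal ((1 + dist y u / δ) ^ (-σ))) := by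
    intro u
    set a : ℝ := 1 + dist x u / δ with hadef
    set b : ℝ := 1 + dist y u / δ with hbdef
    have ha1 : (1:ℝ) ≤ a := by
      rw [hadef]
      have := div_nonneg (dist_nonneg (x := x) (y := u)) hδ.le; linarith
    have hb1 : (1:ℝ) ≤ b := by
      rw [hbdef]
      have := div_nonneg (dist_nonneg (x := y) (y := u)) hδ.le; linarith
    have ha0 : (0:ℝ) < a := lt_of_lt_of_le one_pos ha1
    have hb0 : (0:ℝ) < b := lt_of_lt_of_le one_pos hb1
    have hcab : c ≤ a + b := by
      have htri : dist x y ≤ dist x u + dist y u := by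
        rw [dist_comm y u]; exact dist_triangle x u y
      have : dist x y / δ ≤ dist x u / δ + dist y u / δ := by
        rw [← add_div]
        gcongr
      rw [hadef, hbdef, hc]; linarith
    have key := two_peaks_pointwise ha1 hb1 hc0 hcab hσ0
    calc ENNReal.ofReal (a ^ (-σ) * b ^ (-σ))
        ≤ ENNReal.ofReal ((2:ℝ) ^ σ * c ^ (-σ) * (a ^ (-σ) + b ^ (-σ))) :=
          ENNReal.ofReal_le_ofReal key
      _ = ENNReal.ofReal ((2:ℝ) ^ σ * c ^ (-σ)) *
            (ENNReal.ofReal (a ^ (-σ)) + ENNReal.ofReal (b ^ (-σ))) := by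
          rw [ENNReal.ofReal_mul (by positivity),
              ENNReal.ofReal_add (by positivity) (by positivity)]
  have hmeasf : ∀ z : M, Measurable fun u : M => ENNReal.ofReal ((1 + dist z u / δ) ^ (-σ)) := by
    intro z
    apply Measurable.ennreal_ofReal
    have hcont : Continuous fun u : M => 1 + dist z u / δ :=
      continuous_const.add ((continuous_const.dist continuous_id).div_const δ)
    have hne : ∀ u : M, (1 + dist z u / δ) ≠ 0 ∨ 0 ≤ -σ := by
      intro u
      left
      have := div_nonneg (dist_nonneg (x := z) (y := u)) hδ.le
      positivity
    exact (hcont.rpow_const hne).measurable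
  calc ∫⁻ u, ENNReal.ofReal ((1 + dist x u / δ) ^ (-σ) * (1 + dist y u / δ) ^ (-σ)) ∂μ
      ≤ ∫⁻ u, ENNReal.ofReal ((2:ℝ) ^ σ * c ^ (-σ)) *
          (ENNReal.ofReal ((1 + dist x u / δ) ^ (-σ)) +
           ENNReal.ofReal ((1 + dist y u / δ) ^ (-σ))) ∂μ := lintegral_mono hpt
    _ = ENNReal.ofReal ((2:ℝ) ^ σ * c ^ (-σ)) *
          ((∫⁻ u, ENNReal.ofReal ((1 + dist x u / δ) ^ (-σ)) ∂μ) +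
           (∫⁻ u, ENNReal.ofReal ((1 + dist y u / δ) ^ (-σ)) ∂μ)) := by
        rw [lintegral_const_mul _ (f := fun u => ENNReal.ofReal ((1 + dist x u / δ) ^ (-σ)) + ENNReal.ofReal ((1 + dist y u / δ) ^ (-σ))) ((hmeasf x).add (hmeasf y)),
            lintegral_add_left (hmeasf x)]
    _ ≤ ENNReal.ofReal ((2:ℝ) ^ σ * c ^ (-σ)) *
          (ENNReal.ofReal (((2 : ℝ) ^ (-d) - (2 : ℝ) ^ (-σ))⁻¹) * μ (ball x δ) +
           ENNReal.ofReal (((2 : ℝ) ^ (-d) - (2 : ℝ) ^ (-σ))⁻¹) * μ (ball y δ)) := by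
        gcongr
        · exact single_peak μ d hd hdoub σ δ hσ hδ x
        · exact single_peak μ d hd hdoub σ δ hσ hδ y
    _ = ENNReal.ofReal ((2 : ℝ) ^ σ * ((2 : ℝ) ^ (-d) - (2 : ℝ) ^ (-σ))⁻¹)
          * (μ (ball x δ) + μ (ball y δ)) * ENNReal.ofReal (c ^ (-σ)) := by
        rw [← mul_add, ENNReal.ofReal_mul (le_of_lt (Real.rpow_pos_of_pos two_pos σ)),
            ENNReal.ofReal_mul (le_of_lt (Real.rpow_pos_of_pos two_pos σ))]
        ring
end

section
/- Define D_{δ,σ}(x,y) := (μ(B(x,δ)) μ(B(y,δ)))^{-1/2} (1 + ρ(x,y)/δ)^{-σ}. In a doubling metric measure space with exponent d, if σ > 2d, then for all x, y ∈ M and δ > 0: ∫_M D_{δ,σ}(x,u) D_{δ,σ}(u,y) dμ(u) ≤ c D_{δ,σ}(x,y) with c = 2^{σ+d+1}/(2^{-d} − 2^{d−σ}). -/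
open MeasureTheory Metric
open scoped ENNReal NNReal

/-- The localization kernel `D_{δ,σ}(x,y)`. -/
noncomputable def Dker {M : Type*} [MetricSpace M] [MeasurableSpace M]
    (μ : Measure M) (δ σ : ℝ) (x y : M) : ℝ≥0∞ :=
  (μ (ball x δ) * μ (ball y δ)) ^ (-(1 / 2 : ℝ)) *
    ENNReal.ofReal ((1 + dist x y / δ) ^ (-σ))

lemma measurable_measure_ball' {M : Type*} [MetricSpace M] [MeasurableSpace M]
    [OpensMeasurableSpace M] (μ : Measure M) (δ : ℝ) :
    Measurable fun u : M => μ (ball u δ) := by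
  apply measurable_of_Ioi
  intro c
  suffices h : IsOpen {u : M | c < μ (ball u δ)} from h.measurableSet
  rw [Metric.isOpen_iff]
  intro u hu
  have hmono : Monotone fun n : ℕ => ball u (δ - 1 / (n + 1)) := by
    intro n m hnm
    apply ball_subset_ball
    have : (1:ℝ) / (m+1) ≤ 1 / (n+1) := by
      apply one_div_le_one_div_of_le (by positivity)
      exact_mod_cast by exact_mod_cast add_le_add_left (Nat.cast_le.mpr hnm) 1
    linarith
  have hunion : ball u δ = ⋃ n : ℕ, ball u (δ - 1 / (n + 1)) := by
    ext v
    simp only [mem_ball, Set.mem_iUnion]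
    constructor
    · intro hv
      obtain ⟨n, hn⟩ := exists_nat_one_div_lt (show (0:ℝ) < δ - dist v u by linarith)
      exact ⟨n, by push_cast at hn ⊢; linarith⟩
    · rintro ⟨n, hn⟩
      have : (0:ℝ) < 1 / (n+1) := by positivity
      linarith
  have hu' : c < μ (ball u δ) := hu
  rw [hunion, (hmono.directed_le).measure_iUnion, lt_iSup_iff] at hu'
  obtain ⟨n, hn⟩ := hu'
  refine ⟨1 / (n+1), by positivity, ?_⟩
  intro u' hu'
  simp only [Set.mem_setOf_eq]
  refine lt_of_lt_of_le hn (measure_mono ?_)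
  intro v hv
  simp only [mem_ball] at hv hu' ⊢
  have := dist_triangle v u u'
  have h2 : dist u u' = dist u' u := dist_comm u u'
  linarith


lemma doub_pow {M : Type*} [MetricSpace M] [MeasurableSpace M]
    (μ : Measure M) (d : ℝ)
    (hdoub : ∀ (x : M) (r : ℝ), 0 < r →
      μ (ball x (2 * r)) ≤ ENNReal.ofReal ((2 : ℝ) ^ d) * μ (ball x r)) :
    ∀ (n : ℕ) (z : M) (r : ℝ), 0 < r →
      μ (ball z ((2:ℝ)^n * r)) ≤ (ENNReal.ofReal ((2 : ℝ) ^ d))^n * μ (ball z r) := by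
  intro n
  induction n with
  | zero => intro z r hr; simp
  | succ n ih =>
    intro z r hr
    have hrad : (2:ℝ)^(n+1) * r = 2 * ((2:ℝ)^n * r) := by ring
    rw [hrad]
    calc μ (ball z (2 * ((2:ℝ)^n * r)))
        ≤ ENNReal.ofReal ((2:ℝ)^d) * μ (ball z ((2:ℝ)^n * r)) :=
          hdoub z _ (by positivity)
      _ ≤ ENNReal.ofReal ((2:ℝ)^d) * ((ENNReal.ofReal ((2:ℝ)^d))^n * μ (ball z r)) :=
          mul_le_mul_right (ih z r hr) _
      _ = (ENNReal.ofReal ((2:ℝ)^d))^(n+1) * μ (ball z r) := by ring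

/-- Real arithmetic for the per-annulus term. -/
lemma real_term (d σ : ℝ) (j : ℕ) :
    ((2:ℝ)^d)^(2*(j+1)) * ((2:ℝ)^j : ℝ)^(-σ)
      = (2:ℝ)^(2*d) * ((2:ℝ)^(2*d-σ))^j := by
  have h2 : (0:ℝ) ≤ 2 := by norm_num
  rw [← Real.rpow_natCast ((2:ℝ)^d) (2*(j+1)), ← Real.rpow_natCast (2:ℝ) j,
    ← Real.rpow_natCast ((2:ℝ)^(2*d-σ)) j,
    ← Real.rpow_mul h2, ← Real.rpow_mul h2, ← Real.rpow_mul h2,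
    ← Real.rpow_add (by norm_num : (0:ℝ) < 2), ← Real.rpow_add (by norm_num : (0:ℝ) < 2)]
  congr 1
  push_cast
  ring


/-- Antitonicity of `rpow` in the base for nonpositive exponents, plus doubling of base. -/
lemma tail_key {δ σ a c : ℝ} (hδ : 0 < δ) (hσ : 0 < σ) (ha : 0 ≤ a) (hc : 0 ≤ c)
    (hca : c ≤ 2 * a) :
    (1 + a / δ) ^ (-σ) ≤ (2:ℝ)^σ * (1 + c / δ) ^ (-σ) := by
  have hap : (0:ℝ) < 1 + a / δ := by positivity
  have hcp : (0:ℝ) < 1 + c / δ := by positivity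
  have h1 : 1 + c / δ ≤ 2 * (1 + a / δ) := by
    have : c / δ ≤ 2 * (a / δ) := by
      rw [div_le_iff₀ hδ] at *
      calc c ≤ 2 * a := hca
        _ = 2 * (a / δ) * δ := by field_simp
    linarith
  have h2 : (2 * (1 + a / δ)) ^ (-σ) ≤ (1 + c / δ) ^ (-σ) :=
    Real.rpow_le_rpow_of_nonpos hcp h1 (neg_nonpos.mpr hσ.le)
  have h3 : (2 * (1 + a / δ)) ^ (-σ) = 2 ^ (-σ) * (1 + a / δ) ^ (-σ) :=
    Real.mul_rpow (by norm_num) hap.le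
  have h4 : (2:ℝ)^σ * (2:ℝ)^(-σ) = 1 := by
    rw [← Real.rpow_add (by norm_num : (0:ℝ) < 2)]
    simp
  calc (1 + a / δ) ^ (-σ) = (2:ℝ)^σ * ((2:ℝ)^(-σ) * (1 + a / δ) ^ (-σ)) := by
        rw [← mul_assoc, h4, one_mul]
    _ = (2:ℝ)^σ * (2 * (1 + a / δ)) ^ (-σ) := by rw [h3]
    _ ≤ (2:ℝ)^σ * (1 + c / δ) ^ (-σ) := by
        apply mul_le_mul_of_nonneg_left h2 (by positivity)


lemma tail_mul_le {δ σ : ℝ} (hδ : 0 < δ) (hσ : 0 < σ) {a b c : ℝ}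
    (ha : 0 ≤ a) (hb : 0 ≤ b) (hc : 0 ≤ c) (htri : c ≤ a + b) :
    (1 + a/δ)^(-σ) * (1 + b/δ)^(-σ)
      ≤ (2:ℝ)^σ * (1 + c/δ)^(-σ) * ((1 + a/δ)^(-σ) + (1 + b/δ)^(-σ)) := by
  have hta : (0:ℝ) ≤ (1 + a/δ)^(-σ) := Real.rpow_nonneg (by positivity) _
  have htb : (0:ℝ) ≤ (1 + b/δ)^(-σ) := Real.rpow_nonneg (by positivity) _
  rcases le_total b a with hba | hab
  · have key := tail_key hδ hσ ha hc (by linarith)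
    calc (1 + a/δ)^(-σ) * (1 + b/δ)^(-σ)
        ≤ ((2:ℝ)^σ * (1 + c/δ)^(-σ)) * (1 + b/δ)^(-σ) :=
          mul_le_mul_of_nonneg_right key htb
      _ ≤ (2:ℝ)^σ * (1 + c/δ)^(-σ) * ((1 + a/δ)^(-σ) + (1 + b/δ)^(-σ)) := by
          apply mul_le_mul_of_nonneg_left (by linarith) (by positivity)
  · have key := tail_key hδ hσ hb hc (by linarith)
    calc (1 + a/δ)^(-σ) * (1 + b/δ)^(-σ)
        ≤ (1 + a/δ)^(-σ) * ((2:ℝ)^σ * (1 + c/δ)^(-σ)) :=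
          mul_le_mul_of_nonneg_left key hta
      _ = ((2:ℝ)^σ * (1 + c/δ)^(-σ)) * (1 + a/δ)^(-σ) := by ring
      _ ≤ (2:ℝ)^σ * (1 + c/δ)^(-σ) * ((1 + a/δ)^(-σ) + (1 + b/δ)^(-σ)) := by
          apply mul_le_mul_of_nonneg_left (by linarith) (by positivity)


/-- Final constant arithmetic. -/
lemma const_arith {d σ : ℝ} (hd : 0 < d) (hσ : 2 * d < σ) :
    (2:ℝ)^σ * ((2:ℝ)^(2*d) * (1 - (2:ℝ)^(2*d-σ))⁻¹ + (2:ℝ)^(2*d) * (1 - (2:ℝ)^(2*d-σ))⁻¹)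
      = (2:ℝ)^(σ + d + 1) / ((2:ℝ)^(-d) - (2:ℝ)^(d - σ)) := by
  have h2 : (0:ℝ) < 2 := by norm_num
  have hr1 : (2:ℝ)^(2*d-σ) < 1 := Real.rpow_lt_one_of_one_lt_of_neg one_lt_two (by linarith)
  have hden : (2:ℝ)^(-d) - (2:ℝ)^(d-σ) = (2:ℝ)^(-d) * (1 - (2:ℝ)^(2*d-σ)) := by
    rw [mul_sub, mul_one, ← Real.rpow_add h2]
    ring_nf
  rw [hden]
  have h1 : (0:ℝ) < 1 - (2:ℝ)^(2*d-σ) := by linarith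
  have hnd : (0:ℝ) < (2:ℝ)^(-d) := Real.rpow_pos_of_pos h2 _
  rw [div_mul_eq_div_div, Real.rpow_neg h2.le, div_inv_eq_mul]
  rw [← Real.rpow_add h2, show σ + d + 1 + d = σ + 2*d + 1 by ring,
    show σ + 2*d + 1 = (σ + 2*d) + 1 by ring, Real.rpow_add h2, Real.rpow_add h2,
    Real.rpow_one]
  field_simp
  ring

lemma key_integral {M : Type*} [MetricSpace M] [MeasurableSpace M]
    [OpensMeasurableSpace M]
    (μ : Measure M) (d : ℝ) (hd : 0 < d)
    (hpos : ∀ (x : M) (r : ℝ), 0 < r → 0 < μ (ball x r))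
    (hfin : ∀ (x : M) (r : ℝ), 0 < r → μ (ball x r) < ⊤)
    (hdoub : ∀ (x : M) (r : ℝ), 0 < r →
      μ (ball x (2 * r)) ≤ ENNReal.ofReal ((2 : ℝ) ^ d) * μ (ball x r))
    (σ δ : ℝ) (hσ : 2 * d < σ) (hδ : 0 < δ) (z : M) :
    ∫⁻ u, (μ (ball u δ))⁻¹ * ENNReal.ofReal ((1 + dist u z / δ) ^ (-σ)) ∂μ
      ≤ ENNReal.ofReal ((2:ℝ)^(2*d)) * ENNReal.ofReal ((1 - (2:ℝ)^(2*d-σ))⁻¹) := by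
  have hσ0 : 0 < σ := by linarith
  set ν := μ (ball z δ) with hν
  have hν0 : ν ≠ 0 := (hpos z δ hδ).ne'
  have hνt : ν ≠ ⊤ := (hfin z δ hδ).ne
  set c2 : ℝ≥0∞ := ENNReal.ofReal ((2:ℝ)^d) with hc2
  have hc20 : c2 ≠ 0 := by
    simp only [hc2, ne_eq, ENNReal.ofReal_eq_zero, not_le]
    positivity
  have hc2t : c2 ≠ ⊤ := ENNReal.ofReal_ne_top
  set A : ℕ → Set M := fun j => {u | (2:ℝ)^j ≤ 1 + dist u z / δ ∧ 1 + dist u z / δ < 2^(j+1)}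
    with hA
  have hf : Measurable fun u : M => 1 + dist u z / δ := by
    exact (continuous_const.add ((continuous_id.dist continuous_const).div_const δ)).measurable
  have hAmeas : ∀ j, MeasurableSet (A j) := by
    intro j
    have : A j = (fun u : M => 1 + dist u z / δ) ⁻¹' Set.Ico ((2:ℝ)^j) (2^(j+1)) := by
      ext u; simp [hA, Set.mem_Ico]
    rw [this]
    exact hf measurableSet_Ico
  set K : ℕ → ℝ≥0∞ := fun j =>
    c2^(j+1) * ν⁻¹ * ENNReal.ofReal (((2:ℝ)^j : ℝ)^(-σ)) with hK
  -- pointwise bound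
  have hpt : ∀ u, (μ (ball u δ))⁻¹ * ENNReal.ofReal ((1 + dist u z / δ) ^ (-σ))
      ≤ ∑' j, (A j).indicator (fun _ => K j) u := by
    intro u
    set v : ℝ := 1 + dist u z / δ with hv
    have hv1 : 1 ≤ v := le_add_of_nonneg_right (div_nonneg dist_nonneg hδ.le)
    have hex : ∃ m : ℕ, v < 2^(m+1) := by
      obtain ⟨n, hn⟩ := pow_unbounded_of_one_lt v (one_lt_two (α := ℝ))
      exact ⟨n, lt_of_lt_of_le hn (pow_le_pow_right₀ one_le_two (Nat.le_succ n))⟩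
    set j := Nat.find hex with hj
    have hju : v < 2^(j+1) := Nat.find_spec hex
    have hjl : (2:ℝ)^j ≤ v := by
      rcases Nat.eq_zero_or_pos j with h0 | h0
      · rw [h0]; simpa using hv1
      · have hmin := Nat.find_min hex (m := j - 1) (by omega)
        push_neg at hmin
        have : j - 1 + 1 = j := by omega
        rwa [this] at hmin
    have hmem : u ∈ A j := ⟨hjl, hju⟩
    have hB0 : μ (ball u δ) ≠ 0 := (hpos u δ hδ).ne'
    -- lower bound on μ (ball u δ)
    have hsub : ball z δ ⊆ ball u ((2:ℝ)^(j+1) * δ) := by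
      intro w hw
      simp only [mem_ball] at hw ⊢
      have h1 : dist w u ≤ dist w z + dist z u := dist_triangle w z u
      have h2 : dist z u = dist u z := dist_comm z u
      have h3 : δ + dist u z = δ * v := by
          rw [hv, mul_add, mul_one, mul_div_assoc', mul_comm δ (dist u z), mul_div_assoc,
            div_self hδ.ne', mul_one]
      have h4 : δ * v < δ * 2^(j+1) := by
        exact mul_lt_mul_of_pos_left hju hδ
      linarith
    have hinv : (μ (ball u δ))⁻¹ ≤ c2^(j+1) * ν⁻¹ := by
      have h1 : ν ≤ c2^(j+1) * μ (ball u δ) :=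
        (measure_mono hsub).trans (doub_pow μ d hdoub (j+1) u δ hδ)
      have hKc0 : c2^(j+1) ≠ 0 := pow_ne_zero _ hc20
      have hKct : c2^(j+1) ≠ ⊤ := ENNReal.pow_ne_top hc2t
      have h2 : (c2^(j+1) * μ (ball u δ))⁻¹ ≤ ν⁻¹ := ENNReal.inv_le_inv.mpr h1
      rw [ENNReal.mul_inv (Or.inl hKc0) (Or.inl hKct)] at h2
      calc (μ (ball u δ))⁻¹ = c2^(j+1) * ((c2^(j+1))⁻¹ * (μ (ball u δ))⁻¹) := by
            rw [← mul_assoc, ENNReal.mul_inv_cancel hKc0 hKct, one_mul]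
        _ ≤ c2^(j+1) * ν⁻¹ := mul_le_mul_right h2 _
    have htail : ENNReal.ofReal (v ^ (-σ)) ≤ ENNReal.ofReal (((2:ℝ)^j : ℝ)^(-σ)) := by
      apply ENNReal.ofReal_le_ofReal
      exact Real.rpow_le_rpow_of_nonpos (by positivity) hjl (neg_nonpos.mpr hσ0.le)
    calc (μ (ball u δ))⁻¹ * ENNReal.ofReal (v ^ (-σ))
        ≤ (c2^(j+1) * ν⁻¹) * ENNReal.ofReal (((2:ℝ)^j : ℝ)^(-σ)) := mul_le_mul' hinv htail
      _ = (A j).indicator (fun _ => K j) u := by rw [Set.indicator_of_mem hmem]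
      _ ≤ ∑' i, (A i).indicator (fun _ => K i) u := ENNReal.le_tsum j
  -- annulus measure bound
  have hAbound : ∀ j, μ (A j) ≤ c2^(j+1) * ν := by
    intro j
    have hsub : A j ⊆ ball z ((2:ℝ)^(j+1) * δ) := by
      intro u hu
      simp only [hA, Set.mem_setOf_eq] at hu
      simp only [mem_ball]
      have h1 : dist u z / δ < 2^(j+1) := by
        have := hu.2
        nlinarith [pow_pos (show (0:ℝ) < 2 by norm_num) (j+1)]
      exact (div_lt_iff₀ hδ).mp h1
    exact (measure_mono hsub).trans (doub_pow μ d hdoub (j+1) z δ hδ)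
  calc ∫⁻ u, (μ (ball u δ))⁻¹ * ENNReal.ofReal ((1 + dist u z / δ) ^ (-σ)) ∂μ
      ≤ ∫⁻ u, ∑' j, (A j).indicator (fun _ => K j) u ∂μ := lintegral_mono hpt
    _ = ∑' j, ∫⁻ u, (A j).indicator (fun _ => K j) u ∂μ :=
        lintegral_tsum (fun j => (measurable_const.indicator (hAmeas j)).aemeasurable)
    _ = ∑' j, K j * μ (A j) := by
        congr 1; ext j; exact lintegral_indicator_const (hAmeas j) _
    _ ≤ ∑' j, K j * (c2^(j+1) * ν) :=
        ENNReal.tsum_le_tsum (fun j => mul_le_mul_right (hAbound j) _)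
    _ = ∑' j, ENNReal.ofReal ((2:ℝ)^(2*d)) * (ENNReal.ofReal ((2:ℝ)^(2*d-σ)))^j := by
        congr 1; ext j
        rw [hK]
        have hνν : ν⁻¹ * ν = 1 := ENNReal.inv_mul_cancel hν0 hνt
        calc c2^(j+1) * ν⁻¹ * ENNReal.ofReal (((2:ℝ)^j : ℝ)^(-σ)) * (c2^(j+1) * ν)
            = (c2^(j+1) * c2^(j+1) * ENNReal.ofReal (((2:ℝ)^j : ℝ)^(-σ))) * (ν⁻¹ * ν) := by
              ring
          _ = c2^(2*(j+1)) * ENNReal.ofReal (((2:ℝ)^j : ℝ)^(-σ)) := by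
              rw [hνν, mul_one, ← pow_add]
              congr 2
              omega
          _ = ENNReal.ofReal (((2:ℝ)^d)^(2*(j+1)) * ((2:ℝ)^j : ℝ)^(-σ)) := by
              rw [hc2, ← ENNReal.ofReal_pow (by positivity), ← ENNReal.ofReal_mul (by positivity)]
          _ = ENNReal.ofReal ((2:ℝ)^(2*d) * ((2:ℝ)^(2*d-σ))^j) := by
              rw [real_term]
          _ = ENNReal.ofReal ((2:ℝ)^(2*d)) * (ENNReal.ofReal ((2:ℝ)^(2*d-σ)))^j := by
              rw [ENNReal.ofReal_mul (by positivity), ENNReal.ofReal_pow (by positivity)]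
    _ = ENNReal.ofReal ((2:ℝ)^(2*d)) * ∑' j, (ENNReal.ofReal ((2:ℝ)^(2*d-σ)))^j :=
        ENNReal.tsum_mul_left
    _ = ENNReal.ofReal ((2:ℝ)^(2*d)) * (1 - ENNReal.ofReal ((2:ℝ)^(2*d-σ)))⁻¹ := by
        rw [ENNReal.tsum_geometric]
    _ = ENNReal.ofReal ((2:ℝ)^(2*d)) * ENNReal.ofReal ((1 - (2:ℝ)^(2*d-σ))⁻¹) := by
        have hr1 : (2:ℝ)^(2*d-σ) < 1 :=
          Real.rpow_lt_one_of_one_lt_of_neg one_lt_two (by linarith)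
        rw [ENNReal.ofReal_inv_of_pos (by linarith), ENNReal.ofReal_sub _ (by positivity),
          ENNReal.ofReal_one]

theorem Dker_composition {M : Type*} [MetricSpace M] [MeasurableSpace M]
    [OpensMeasurableSpace M]
    (μ : Measure M) (d : ℝ) (hd : 0 < d)
    (hpos : ∀ (x : M) (r : ℝ), 0 < r → 0 < μ (ball x r))
    (hfin : ∀ (x : M) (r : ℝ), 0 < r → μ (ball x r) < ⊤)
    (hdoub : ∀ (x : M) (r : ℝ), 0 < r →
      μ (ball x (2 * r)) ≤ ENNReal.ofReal ((2 : ℝ) ^ d) * μ (ball x r))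
    (σ δ : ℝ) (hσ : 2 * d < σ) (hδ : 0 < δ) (x y : M) :
    ∫⁻ u, Dker μ δ σ x u * Dker μ δ σ u y ∂μ
      ≤ ENNReal.ofReal ((2 : ℝ) ^ (σ + d + 1) / ((2 : ℝ) ^ (-d) - (2 : ℝ) ^ (d - σ)))
          * Dker μ δ σ x y := by
  have hσ0 : 0 < σ := by linarith
  set e : ℝ := -(1/2 : ℝ) with he
  set Bx := μ (ball x δ) with hBx
  set By := μ (ball y δ) with hBy
  have hBx0 : Bx ≠ 0 := (hpos x δ hδ).ne'
  have hBxt : Bx ≠ ⊤ := (hfin x δ hδ).ne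
  have hBy0 : By ≠ 0 := (hpos y δ hδ).ne'
  have hByt : By ≠ ⊤ := (hfin y δ hδ).ne
  have hBxe : Bx ^ e ≠ ⊤ := by
    rw [he, ENNReal.rpow_neg]
    exact ENNReal.inv_ne_top.mpr (ENNReal.rpow_pos (hpos x δ hδ) hBxt).ne'
  have hBye : By ^ e ≠ ⊤ := by
    rw [he, ENNReal.rpow_neg]
    exact ENNReal.inv_ne_top.mpr (ENNReal.rpow_pos (hpos y δ hδ) hByt).ne'
  set P : ℝ≥0∞ := Bx ^ e * By ^ e with hP
  have hPt : P ≠ ⊤ := ENNReal.mul_ne_top hBxe hBye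
  set Tc : ℝ := (1 + dist x y / δ) ^ (-σ) with hTc
  have hTc0 : 0 ≤ Tc := Real.rpow_nonneg (by positivity) _
  set C0 : ℝ≥0∞ := P * (ENNReal.ofReal ((2:ℝ)^σ) * ENNReal.ofReal Tc) with hC0
  have hC0t : C0 ≠ ⊤ :=
    ENNReal.mul_ne_top hPt (ENNReal.mul_ne_top ENNReal.ofReal_ne_top ENNReal.ofReal_ne_top)
  -- pointwise rewrite
  have hrw : ∀ u, Dker μ δ σ x u * Dker μ δ σ u y
      = P * ((μ (ball u δ))⁻¹ *
          (ENNReal.ofReal ((1 + dist x u / δ) ^ (-σ)) *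
            ENNReal.ofReal ((1 + dist u y / δ) ^ (-σ)))) := by
    intro u
    have hBu0 : μ (ball u δ) ≠ 0 := (hpos u δ hδ).ne'
    have hBut : μ (ball u δ) ≠ ⊤ := (hfin u δ hδ).ne
    have hBu2 : (μ (ball u δ))^e * (μ (ball u δ))^e = (μ (ball u δ))⁻¹ := by
      rw [← ENNReal.rpow_add e e hBu0 hBut, he,
        show (-(1/2:ℝ)) + -(1/2) = -1 by norm_num, ENNReal.rpow_neg_one]
    simp only [Dker, ← hBx, ← hBy, ← he]
    rw [ENNReal.mul_rpow_of_ne_top hBxt hBut, ENNReal.mul_rpow_of_ne_top hBut hByt,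
      hP, ← hBu2]
    ring
  -- pointwise bound
  have hbound : ∀ u, Dker μ δ σ x u * Dker μ δ σ u y
      ≤ C0 * ((μ (ball u δ))⁻¹ * ENNReal.ofReal ((1 + dist x u / δ) ^ (-σ))
            + (μ (ball u δ))⁻¹ * ENNReal.ofReal ((1 + dist u y / δ) ^ (-σ))) := by
    intro u
    rw [hrw u]
    set Ta : ℝ := (1 + dist x u / δ) ^ (-σ) with hTa
    set Tb : ℝ := (1 + dist u y / δ) ^ (-σ) with hTb
    have hTa0 : 0 ≤ Ta := Real.rpow_nonneg (by positivity) _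
    have hTb0 : 0 ≤ Tb := Real.rpow_nonneg (by positivity) _
    have h2 : Ta * Tb ≤ (2:ℝ)^σ * Tc * (Ta + Tb) :=
      tail_mul_le hδ hσ0 dist_nonneg dist_nonneg dist_nonneg (dist_triangle x u y)
    have h3 : ENNReal.ofReal Ta * ENNReal.ofReal Tb
        ≤ ENNReal.ofReal ((2:ℝ)^σ) * ENNReal.ofReal Tc *
            (ENNReal.ofReal Ta + ENNReal.ofReal Tb) := by
      rw [← ENNReal.ofReal_mul hTa0, ← ENNReal.ofReal_mul (by positivity),
        ← ENNReal.ofReal_add hTa0 hTb0, ← ENNReal.ofReal_mul (by positivity)]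
      exact ENNReal.ofReal_le_ofReal h2
    calc P * ((μ (ball u δ))⁻¹ * (ENNReal.ofReal Ta * ENNReal.ofReal Tb))
        ≤ P * ((μ (ball u δ))⁻¹ *
            (ENNReal.ofReal ((2:ℝ)^σ) * ENNReal.ofReal Tc *
              (ENNReal.ofReal Ta + ENNReal.ofReal Tb))) := by
          exact mul_le_mul_right (mul_le_mul_right h3 _) _
      _ = C0 * ((μ (ball u δ))⁻¹ * ENNReal.ofReal Ta
            + (μ (ball u δ))⁻¹ * ENNReal.ofReal Tb) := by
          rw [hC0]; ring
  -- measurability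
  have hf1 : Measurable fun u : M =>
      (μ (ball u δ))⁻¹ * ENNReal.ofReal ((1 + dist x u / δ) ^ (-σ)) := by
    apply ((measurable_measure_ball' μ δ).inv).mul
    apply ENNReal.measurable_ofReal.comp
    apply Continuous.measurable
    apply Continuous.rpow_const
    · exact continuous_const.add ((continuous_const.dist continuous_id).div_const δ)
    · intro u; left; positivity
  set K : ℝ≥0∞ := ENNReal.ofReal ((2:ℝ)^(2*d)) * ENNReal.ofReal ((1 - (2:ℝ)^(2*d-σ))⁻¹)
    with hKdef
  have hkey1 : ∫⁻ u, (μ (ball u δ))⁻¹ * ENNReal.ofReal ((1 + dist x u / δ) ^ (-σ)) ∂μ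
      ≤ K := by
    simp_rw [dist_comm x]
    exact key_integral μ d hd hpos hfin hdoub σ δ hσ hδ x
  have hkey2 : ∫⁻ u, (μ (ball u δ))⁻¹ * ENNReal.ofReal ((1 + dist u y / δ) ^ (-σ)) ∂μ
      ≤ K := key_integral μ d hd hpos hfin hdoub σ δ hσ hδ y
  -- final scalar identity
  have hscal : ENNReal.ofReal ((2:ℝ)^σ) * (K + K)
      = ENNReal.ofReal ((2 : ℝ) ^ (σ + d + 1) / ((2 : ℝ) ^ (-d) - (2 : ℝ) ^ (d - σ))) := by
    have hr1 : (2:ℝ)^(2*d-σ) < 1 :=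
      Real.rpow_lt_one_of_one_lt_of_neg one_lt_two (by linarith)
    have hq : 0 ≤ (2:ℝ)^(2*d) * (1 - (2:ℝ)^(2*d-σ))⁻¹ :=
      mul_nonneg (by positivity) (inv_nonneg.mpr (by linarith))
    rw [hKdef, ← ENNReal.ofReal_mul (by positivity),
      ← ENNReal.ofReal_add hq hq,
      ← ENNReal.ofReal_mul (by positivity), const_arith hd hσ]
  calc ∫⁻ u, Dker μ δ σ x u * Dker μ δ σ u y ∂μ
      ≤ ∫⁻ u, C0 * ((μ (ball u δ))⁻¹ * ENNReal.ofReal ((1 + dist x u / δ) ^ (-σ))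
            + (μ (ball u δ))⁻¹ * ENNReal.ofReal ((1 + dist u y / δ) ^ (-σ))) ∂μ :=
        lintegral_mono hbound
    _ = C0 * ∫⁻ u, ((μ (ball u δ))⁻¹ * ENNReal.ofReal ((1 + dist x u / δ) ^ (-σ))
            + (μ (ball u δ))⁻¹ * ENNReal.ofReal ((1 + dist u y / δ) ^ (-σ))) ∂μ :=
        lintegral_const_mul' _ _ hC0t
    _ = C0 * ((∫⁻ u, (μ (ball u δ))⁻¹ * ENNReal.ofReal ((1 + dist x u / δ) ^ (-σ)) ∂μ)
            + ∫⁻ u, (μ (ball u δ))⁻¹ * ENNReal.ofReal ((1 + dist u y / δ) ^ (-σ)) ∂μ) := by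
        rw [lintegral_add_left hf1]
    _ ≤ C0 * (K + K) := mul_le_mul_right (add_le_add hkey1 hkey2) _
    _ = ENNReal.ofReal ((2 : ℝ) ^ (σ + d + 1) / ((2 : ℝ) ^ (-d) - (2 : ℝ) ^ (d - σ)))
          * Dker μ δ σ x y := by
        have hD : Dker μ δ σ x y = P * ENNReal.ofReal Tc := by
          simp only [Dker, ← hBx, ← hBy, ← he, ← hTc]
          rw [ENNReal.mul_rpow_of_ne_top hBxt hByt, hP]
        rw [hD, hC0, ← hscal]
        ring
end

section
/- If γ > 0 and 0 ≤ A ≤ X ≤ B are real numbers with A < B, then (X^γ − A^γ)(B^γ − X^γ)/(B^γ − A^γ) ≤ max(γ,1) · X^γ · (√B − √A)/(√B + √A). -/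
private lemma aux_young (γ r : ℝ) (hγ : 1 ≤ γ) (hr : 0 ≤ r) :
    γ * r ^ (γ - 1) ≤ 1 + (γ - 1) * r ^ γ := by
  have hγ0 : 0 < γ := lt_of_lt_of_le one_pos hγ
  have h3 : (r ^ γ) ^ ((γ - 1) / γ) ≤ (γ - 1) / γ * r ^ γ + 1 / γ := by
    have := Real.geom_mean_le_arith_mean2_weighted
      (w₁ := (γ - 1) / γ) (w₂ := 1 / γ) (p₁ := r ^ γ) (p₂ := 1)
      (div_nonneg (by linarith) hγ0.le) (by positivity) (Real.rpow_nonneg hr γ) zero_le_one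
      (by field_simp; ring)
    simpa using this
  have h2 : (r ^ γ) ^ ((γ - 1) / γ) = r ^ (γ - 1) := by
    rw [← Real.rpow_mul hr]
    congr 1
    field_simp
  rw [h2] at h3
  have := mul_le_mul_of_nonneg_left h3 hγ0.le
  calc γ * r ^ (γ - 1) ≤ γ * ((γ - 1) / γ * r ^ γ + 1 / γ) := this
    _ = 1 + (γ - 1) * r ^ γ := by field_simp; ring

private lemma aux_h_nonneg (γ : ℝ) (hγ : 1 ≤ γ) {r : ℝ} (hr0 : 0 ≤ r) (hr1 : r ≤ 1) :
    0 ≤ (γ - 1) - (γ + 1) * r + (γ + 1) * r ^ γ - (γ - 1) * r ^ (γ + 1) := by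
  set f : ℝ → ℝ := fun t => (γ - 1) - (γ + 1) * t + (γ + 1) * t ^ γ - (γ - 1) * t ^ (γ + 1)
    with hf
  have hγ0 : 0 < γ := lt_of_lt_of_le one_pos hγ
  have hder : ∀ t : ℝ, t ∈ Set.Ioo (0:ℝ) 1 → HasDerivAt f
      (-(γ + 1) + (γ + 1) * (γ * t ^ (γ - 1)) - (γ - 1) * ((γ + 1) * t ^ (γ + 1 - 1))) t := by
    intro t ht
    have h1 : HasDerivAt (fun x : ℝ => x ^ γ) (γ * t ^ (γ - 1)) t :=
      Real.hasDerivAt_rpow_const (Or.inr hγ)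
    have h2 : HasDerivAt (fun x : ℝ => x ^ (γ + 1)) ((γ + 1) * t ^ (γ + 1 - 1)) t :=
      Real.hasDerivAt_rpow_const (Or.inr (by linarith))
    have := (((hasDerivAt_const t (γ - 1)).sub ((hasDerivAt_id t).const_mul (γ + 1))).add
      (h1.const_mul (γ + 1))).sub (h2.const_mul (γ - 1))
    refine this.congr_deriv ?_
    ring
  have hcont : ContinuousOn f (Set.Icc 0 1) := by
    have c1 : ContinuousOn (fun t : ℝ => t ^ γ) (Set.Icc 0 1) := fun x _ =>
      (Real.continuousAt_rpow_const x γ (Or.inr hγ0.le)).continuousWithinAt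
    have c2 : ContinuousOn (fun t : ℝ => t ^ (γ + 1)) (Set.Icc 0 1) := fun x _ =>
      (Real.continuousAt_rpow_const x (γ + 1) (Or.inr (by linarith))).continuousWithinAt
    exact ((continuousOn_const.sub (continuousOn_const.mul continuousOn_id)).add
      (continuousOn_const.mul c1)).sub (continuousOn_const.mul c2)
  have hanti : AntitoneOn f (Set.Icc 0 1) := by
    apply antitoneOn_of_deriv_nonpos (convex_Icc 0 1) hcont
    · rw [interior_Icc]
      intro t ht
      exact (hder t ht).differentiableAt.differentiableWithinAt
    · rw [interior_Icc]
      intro t ht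
      rw [(hder t ht).deriv]
      have hy := aux_young γ t hγ ht.1.le
      have ht1 : t ^ (γ + 1 - 1) = t ^ γ := by norm_num
      rw [ht1]
      nlinarith [Real.rpow_nonneg ht.1.le γ]
  have h1 : f 1 = 0 := by simp [hf]
  have := hanti (Set.mem_Icc.mpr ⟨hr0, hr1⟩) (Set.mem_Icc.mpr ⟨zero_le_one, le_refl 1⟩) hr1
  rw [h1] at this
  exact this

private lemma aux_step2 (γ : ℝ) (hγ : 0 < γ) {r : ℝ} (hr0 : 0 ≤ r) (hr1 : r ≤ 1) :
    (1 - r ^ γ) * (1 + r) ≤ max γ 1 * ((1 - r) * (1 + r ^ γ)) := by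
  rcases le_total γ 1 with h | h
  · rw [max_eq_right h]
    have hrγ1 : r ^ γ ≤ 1 := Real.rpow_le_one hr0 hr1 hγ.le
    have hrrγ : r ≤ r ^ γ := by
      rcases eq_or_lt_of_le hr0 with h0 | h0
      · rw [← h0, Real.zero_rpow (ne_of_gt hγ)]
      · calc r = r ^ (1:ℝ) := (Real.rpow_one r).symm
          _ ≤ r ^ γ := Real.rpow_le_rpow_of_exponent_ge h0 hr1 h
    nlinarith
  · rw [max_eq_left h]
    have hkey := aux_h_nonneg γ h hr0 hr1
    rcases eq_or_lt_of_le hr0 with h0 | h0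
    · rw [← h0, Real.zero_rpow (ne_of_gt hγ)]
      norm_num
      linarith
    · rw [Real.rpow_add_one (ne_of_gt h0)] at hkey
      nlinarith

private lemma aux_amgm {x a b : ℝ} (hx : 0 ≤ x) (ha : 0 ≤ a) (hb : 0 ≤ b) :
    (x - a) * (b - x) ≤ x * (Real.sqrt b - Real.sqrt a) ^ 2 := by
  have h1 := Real.sq_sqrt ha
  have h2 := Real.sq_sqrt hb
  nlinarith [sq_nonneg (x - Real.sqrt a * Real.sqrt b), Real.sqrt_nonneg a, Real.sqrt_nonneg b]

private lemma aux_sqrt_rpow {x : ℝ} (hx : 0 ≤ x) (γ : ℝ) :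
    Real.sqrt (x ^ γ) = (Real.sqrt x) ^ γ := by
  rw [Real.sqrt_eq_rpow, Real.sqrt_eq_rpow, ← Real.rpow_mul hx, ← Real.rpow_mul hx, mul_comm]

theorem jacobi_elementary_inequality (γ A X B : ℝ) (hγ : 0 < γ)
    (hA : 0 ≤ A) (hAX : A ≤ X) (hXB : X ≤ B) (hAB : A < B) :
    (X ^ γ - A ^ γ) * (B ^ γ - X ^ γ) / (B ^ γ - A ^ γ)
      ≤ max γ 1 * X ^ γ * ((Real.sqrt B - Real.sqrt A) / (Real.sqrt B + Real.sqrt A)) := by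
  have hB0 : 0 < B := lt_of_le_of_lt hA hAB
  set α := Real.sqrt A with hαdef
  set β := Real.sqrt B with hβdef
  set M := max γ 1 with hM
  have hM1 : 1 ≤ M := le_max_right γ 1
  have hα0 : 0 ≤ α := Real.sqrt_nonneg A
  have hβ0 : 0 < β := Real.sqrt_pos.mpr hB0
  have hαβ : α < β := Real.sqrt_lt_sqrt hA hAB
  have hX0 : 0 ≤ X := hA.trans hAX
  have hxa : A ^ γ ≤ X ^ γ := Real.rpow_le_rpow hA hAX hγ.le
  have hbx : X ^ γ ≤ B ^ γ := Real.rpow_le_rpow hX0 hXB hγ.le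
  have hab : A ^ γ < B ^ γ := Real.rpow_lt_rpow hA hAB hγ
  have ha0 : 0 ≤ A ^ γ := Real.rpow_nonneg hA γ
  have hx0 : 0 ≤ X ^ γ := Real.rpow_nonneg hX0 γ
  have hb0 : 0 ≤ B ^ γ := Real.rpow_nonneg hB0.le γ
  have hαγ0 : 0 ≤ α ^ γ := Real.rpow_nonneg hα0 γ
  have hβγ0 : 0 < β ^ γ := Real.rpow_pos_of_pos hβ0 γ
  have hαβγ : α ^ γ < β ^ γ := Real.rpow_lt_rpow hα0 hαβ hγ
  have hsa : Real.sqrt (A ^ γ) = α ^ γ := aux_sqrt_rpow hA γ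
  have hsb : Real.sqrt (B ^ γ) = β ^ γ := aux_sqrt_rpow hB0.le γ
  have hsa2 : (α ^ γ) ^ 2 = A ^ γ := by rw [← hsa]; exact Real.sq_sqrt ha0
  have hsb2 : (β ^ γ) ^ 2 = B ^ γ := by rw [← hsb]; exact Real.sq_sqrt hb0
  have key1 : (X ^ γ - A ^ γ) * (B ^ γ - X ^ γ) ≤ X ^ γ * (β ^ γ - α ^ γ) ^ 2 := by
    have := aux_amgm hx0 ha0 hb0
    rwa [hsa, hsb] at this
  have hsumpos : 0 < β ^ γ + α ^ γ := by linarith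
  have hsumpos2 : 0 < β + α := by linarith
  have hBA : 0 < B ^ γ - A ^ γ := by linarith
  -- step 1
  have step1 : (X ^ γ - A ^ γ) * (B ^ γ - X ^ γ) / (B ^ γ - A ^ γ)
      ≤ X ^ γ * ((β ^ γ - α ^ γ) / (β ^ γ + α ^ γ)) := by
    rw [mul_div_assoc' (X ^ γ), div_le_div_iff₀ hBA hsumpos]
    have hba : B ^ γ - A ^ γ = (β ^ γ - α ^ γ) * (β ^ γ + α ^ γ) := by
      rw [← hsa2, ← hsb2]; ring
    rw [hba]
    nlinarith [key1]
  -- step 2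
  have hr0 : 0 ≤ α / β := div_nonneg hα0 hβ0.le
  have hr1 : α / β ≤ 1 := (div_le_one hβ0).mpr hαβ.le
  have h2 := aux_step2 γ hγ hr0 hr1
  rw [Real.div_rpow hα0 hβ0.le] at h2
  have step2 : (β ^ γ - α ^ γ) / (β ^ γ + α ^ γ) ≤ M * ((β - α) / (β + α)) := by
    have hmul := mul_le_mul_of_nonneg_right h2 (le_of_lt (mul_pos hβγ0 hβ0))
    have e1 : (1 - α ^ γ / β ^ γ) * (1 + α / β) * (β ^ γ * β)
        = (β ^ γ - α ^ γ) * (β + α) := by field_simp; try ring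
    have e2 : M * ((1 - α / β) * (1 + α ^ γ / β ^ γ)) * (β ^ γ * β)
        = M * (β - α) * (β ^ γ + α ^ γ) := by field_simp; try ring
    rw [e1, e2] at hmul
    rw [mul_div_assoc' M, div_le_div_iff₀ hsumpos hsumpos2]
    linarith
  calc (X ^ γ - A ^ γ) * (B ^ γ - X ^ γ) / (B ^ γ - A ^ γ)
      ≤ X ^ γ * ((β ^ γ - α ^ γ) / (β ^ γ + α ^ γ)) := step1
    _ ≤ X ^ γ * (M * ((β - α) / (β + α))) := mul_le_mul_of_nonneg_left step2 hx0
    _ = M * X ^ γ * ((β - α) / (β + α)) := by ring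
end

section
/- For α, β > −1 and the Jacobi weight w(x) = (1−x)^α (1+x)^β on [−1,1], the ball volumes with respect to the metric ρ(x,y) = |arccos x − arccos y| and measure dμ = w dx satisfy: there exist constants c₁, c₂ > 0 depending only on α, β such that for all x ∈ [−1,1] and 0 < r ≤ π, c₁ μ(B(x,r)) ≤ r (1−x+r²)^{α+1/2} (1+x+r²)^{β+1/2} ≤ c₂ μ(B(x,r)). In particular μ is a doubling measure on ([−1,1], ρ). -/
open MeasureTheory
open Real Set
open scoped ENNReal NNReal

/-- The Jacobi measure `dμ = (1-x)^α (1+x)^β dx` on `[-1,1]`. -/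
noncomputable def jacobiMeasure (α β : ℝ) : Measure ℝ :=
  (volume.restrict (Set.Icc (-1 : ℝ) 1)).withDensity
    fun x => ENNReal.ofReal ((1 - x) ^ α * (1 + x) ^ β)

/-- The ball of center `x` and radius `r` in `[-1,1]` for the metric
`ρ(x,y) = |arccos x - arccos y|`. -/
def jacobiBall (x r : ℝ) : Set ℝ :=
  {y : ℝ | y ∈ Set.Icc (-1 : ℝ) 1 ∧ |Real.arccos x - Real.arccos y| < r}

namespace JacobiAux

lemma ratio_rpow {a b c C e : ℝ} (hc : 0 < c) (hb : 0 < b)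
    (h1 : c * b ≤ a) (h2 : a ≤ C * b) :
    a ^ e ≤ max (c ^ e) (C ^ e) * b ^ e := by
  have ha : 0 < a := lt_of_lt_of_le (by positivity) h1
  have hC : 0 < C := by nlinarith
  have hd : a ^ e = (a / b) ^ e * b ^ e := by
    rw [← Real.mul_rpow (by positivity) hb.le, div_mul_cancel₀ _ hb.ne']
  rw [hd]
  have hdb1 : c ≤ a / b := (le_div_iff₀ hb).2 (by linarith)
  have hdb2 : a / b ≤ C := (div_le_iff₀ hb).2 (by linarith)
  have : (a / b) ^ e ≤ max (c ^ e) (C ^ e) := by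
    rcases le_or_gt 0 e with he | he
    · exact le_max_of_le_right (Real.rpow_le_rpow (by positivity) hdb2 he)
    · exact le_max_of_le_left (Real.rpow_le_rpow_of_nonpos hc hdb1 he.le)
  exact mul_le_mul_of_nonneg_right this (Real.rpow_nonneg hb.le e)

lemma rpow_min_le {a lo hi e : ℝ} (hlo : 0 < lo) (h1 : lo ≤ a) (h2 : a ≤ hi) :
    min (lo ^ e) (hi ^ e) ≤ a ^ e := by
  rcases le_or_gt 0 e with he | he
  · exact le_trans (min_le_left _ _) (Real.rpow_le_rpow hlo.le h1 he)
  · exact le_trans (min_le_right _ _) (Real.rpow_le_rpow_of_nonpos (by linarith) h2 he.le)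

lemma low_pt {e P t : ℝ} (hP : 0 < P) (h1 : P / 8 ≤ t) (h2 : t ≤ P) :
    min 1 ((8:ℝ) ^ (-e)) * P ^ e ≤ t ^ e := by
  have h8 : ((8:ℝ)) ^ (-e) * P ^ e = (P / 8) ^ e := by
    rw [Real.div_rpow hP.le (by norm_num), Real.rpow_neg (by norm_num), div_eq_mul_inv,
      mul_comm]
  rcases le_or_gt 0 e with he | he
  · calc min 1 ((8:ℝ) ^ (-e)) * P ^ e ≤ (8:ℝ) ^ (-e) * P ^ e :=
        mul_le_mul_of_nonneg_right (min_le_right _ _) (by positivity)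
    _ = (P / 8) ^ e := h8
    _ ≤ t ^ e := Real.rpow_le_rpow (by positivity) h1 he
  · calc min 1 ((8:ℝ) ^ (-e)) * P ^ e ≤ 1 * P ^ e :=
        mul_le_mul_of_nonneg_right (min_le_left _ _) (by positivity)
    _ = P ^ e := one_mul _
    _ ≤ t ^ e := Real.rpow_le_rpow_of_nonpos (by linarith) h2 he.le

lemma lintegral_image_eq_lintegral_abs_deriv_mul' {s : Set ℝ} {f f' : ℝ → ℝ}
    (hs : MeasurableSet s) (hf' : ∀ x ∈ s, HasDerivWithinAt f (f' x) s x) (hf : InjOn f s)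
    (g : ℝ → ℝ≥0∞) :
    ∫⁻ x in f '' s, g x = ∫⁻ x in s, ENNReal.ofReal |f' x| * g (f x) := by
  simpa only [ContinuousLinearMap.det_toSpanSingleton] using
    lintegral_image_eq_lintegral_abs_det_fderiv_mul volume hs
      (fun x hx => (hf' x hx).hasFDerivWithinAt) hf g

lemma sin_half_bounds {t : ℝ} (h0 : 0 ≤ t) (hπ : t ≤ π) :
    t / π ≤ sin (t / 2) ∧ sin (t / 2) ≤ t / 2 := by
  constructor
  · have := Real.mul_le_sin (x := t / 2) (by linarith) (by linarith)
    calc t / π = 2 / π * (t / 2) := by field_simp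
    _ ≤ sin (t / 2) := this
  · exact Real.sin_le (by linarith)

lemma cos_half_bounds {t : ℝ} (h0 : 0 ≤ t) (hπ : t ≤ π) :
    (π - t) / π ≤ cos (t / 2) ∧ cos (t / 2) ≤ (π - t) / 2 := by
  have h : cos (t / 2) = sin ((π - t) / 2) := by
    rw [show (π - t) / 2 = π / 2 - t / 2 by ring, Real.sin_pi_div_two_sub]
  rw [h]
  exact sin_half_bounds (by linarith) (by linarith)


/-- density in angular coordinates -/
noncomputable def g (α β φ : ℝ) : ℝ :=
  Real.sin φ * ((1 - Real.cos φ) ^ α * (1 + Real.cos φ) ^ β)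

lemma g_eq {α β φ : ℝ} (h0 : 0 < φ) (hπ : φ < π) :
    g α β φ = 2 ^ (α + β + 1) *
      (sin (φ/2) ^ (2*α+1) * cos (φ/2) ^ (2*β+1)) := by
  have hs : 0 < sin (φ/2) := Real.sin_pos_of_pos_of_lt_pi (by linarith) (by linarith [Real.pi_pos])
  have hc : 0 < cos (φ/2) := Real.cos_pos_of_mem_Ioo ⟨by linarith [Real.pi_pos], by linarith⟩
  have h1 : 1 - Real.cos φ = 2 * sin (φ/2) ^ 2 := by
    have := Real.sin_sq_eq_half_sub (φ/2)
    rw [show 2 * (φ/2) = φ by ring] at this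
    linarith
  have h2 : 1 + Real.cos φ = 2 * cos (φ/2) ^ 2 := by
    have := Real.cos_sq (φ/2)
    rw [show 2 * (φ/2) = φ by ring] at this
    linarith
  have h3 : Real.sin φ = 2 * sin (φ/2) * cos (φ/2) := by
    have := Real.sin_two_mul (φ/2)
    rwa [show 2 * (φ/2) = φ by ring] at this
  have e1 : (2 * sin (φ/2) ^ 2) ^ α = 2 ^ α * sin (φ/2) ^ (2*α) := by
    rw [Real.mul_rpow (by norm_num) (by positivity)]
    rw [← Real.rpow_natCast (sin (φ/2)) 2, ← Real.rpow_mul hs.le]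
    norm_num
  have e2 : (2 * cos (φ/2) ^ 2) ^ β = 2 ^ β * cos (φ/2) ^ (2*β) := by
    rw [Real.mul_rpow (by norm_num) (by positivity)]
    rw [← Real.rpow_natCast (cos (φ/2)) 2, ← Real.rpow_mul hc.le]
    norm_num
  rw [g, h1, h2, h3, e1, e2]
  rw [Real.rpow_add (by norm_num : (0:ℝ) < 2), Real.rpow_add (by norm_num : (0:ℝ) < 2),
    Real.rpow_one, Real.rpow_add_one hs.ne', Real.rpow_add_one hc.ne']
  ring

/-- pointwise two-sided comparison of `g` with `φ^γ (π-φ)^δ` -/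
lemma g_comp (α β : ℝ) :
    ∃ k₁ k₂ : ℝ, 0 < k₁ ∧ 0 < k₂ ∧ ∀ φ ∈ Ioo (0:ℝ) π,
      k₁ * (φ ^ (2*α+1) * (π - φ) ^ (2*β+1)) ≤ g α β φ ∧
      g α β φ ≤ k₂ * (φ ^ (2*α+1) * (π - φ) ^ (2*β+1)) := by
  set γ := 2*α+1
  set δ := 2*β+1
  have hπ := Real.pi_pos
  refine ⟨2 ^ (α+β+1) * ((max ((2:ℝ)^γ) (π^γ)) * (max ((2:ℝ)^δ) (π^δ)))⁻¹,
    2 ^ (α+β+1) * (max ((π⁻¹:ℝ)^γ) (((2:ℝ)⁻¹)^γ) * max ((π⁻¹:ℝ)^δ) (((2:ℝ)⁻¹)^δ)),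
    by positivity, by positivity, ?_⟩
  rintro φ ⟨h0, hφπ⟩
  have hs : 0 < sin (φ/2) := Real.sin_pos_of_pos_of_lt_pi (by linarith) (by linarith)
  have hc : 0 < cos (φ/2) := Real.cos_pos_of_mem_Ioo ⟨by linarith, by linarith⟩
  obtain ⟨hs1, hs2⟩ := sin_half_bounds h0.le hφπ.le
  obtain ⟨hc1, hc2⟩ := cos_half_bounds h0.le hφπ.le
  rw [g_eq h0 hφπ]
  -- upper bounds: sin(φ/2)^γ ≤ max(π⁻¹^γ, 2⁻¹^γ) φ^γ etc.
  have hsub : 0 < π - φ := by linarith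
  have hu1 : sin (φ/2) ^ γ ≤ max ((π⁻¹:ℝ)^γ) (((2:ℝ)⁻¹)^γ) * φ ^ γ :=
    ratio_rpow (by positivity) h0 (by rw [inv_mul_eq_div]; exact hs1)
      (by rw [inv_mul_eq_div] at *; linarith)
  have hu2 : cos (φ/2) ^ δ ≤ max ((π⁻¹:ℝ)^δ) (((2:ℝ)⁻¹)^δ) * (π - φ) ^ δ :=
    ratio_rpow (by positivity) hsub (by rw [inv_mul_eq_div]; exact hc1)
      (by rw [inv_mul_eq_div] at *; linarith)
  -- lower: φ^γ ≤ max(2^γ, π^γ) sin(φ/2)^γ etc.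
  have hl1 : φ ^ γ ≤ max ((2:ℝ)^γ) (π^γ) * sin (φ/2) ^ γ :=
    ratio_rpow (by norm_num) hs (by linarith)
      (by have := (div_le_iff₀ hπ).1 hs1; linarith)
  have hl2 : (π - φ) ^ δ ≤ max ((2:ℝ)^δ) (π^δ) * cos (φ/2) ^ δ :=
    ratio_rpow (by norm_num) hc (by linarith)
      (by have := (div_le_iff₀ hπ).1 hc1; linarith)
  have hsγ : (0:ℝ) ≤ sin (φ/2) ^ γ := by positivity
  have hcδ : (0:ℝ) ≤ cos (φ/2) ^ δ := by positivity
  have hφγ : (0:ℝ) ≤ φ ^ γ := by positivity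
  have hπφδ : (0:ℝ) ≤ (π - φ) ^ δ := by positivity
  have h2p : (0:ℝ) < 2 ^ (α+β+1) := by positivity
  constructor
  · have hprod : φ ^ γ * (π - φ) ^ δ ≤
        (max ((2:ℝ)^γ) (π^γ) * max ((2:ℝ)^δ) (π^δ)) * (sin (φ/2) ^ γ * cos (φ/2) ^ δ) := by
      calc φ ^ γ * (π - φ) ^ δ
          ≤ (max ((2:ℝ)^γ) (π^γ) * sin (φ/2) ^ γ) * (max ((2:ℝ)^δ) (π^δ) * cos (φ/2) ^ δ) :=
            mul_le_mul hl1 hl2 hπφδ (by positivity)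
        _ = _ := by ring
    set M := max ((2:ℝ)^γ) (π^γ) * max ((2:ℝ)^δ) (π^δ) with hM
    have hMpos : 0 < M := by positivity
    calc 2 ^ (α+β+1) * M⁻¹ * (φ ^ γ * (π - φ) ^ δ)
        ≤ 2 ^ (α+β+1) * M⁻¹ * (M * (sin (φ/2) ^ γ * cos (φ/2) ^ δ)) := by
          apply mul_le_mul_of_nonneg_left hprod (by positivity)
      _ = 2 ^ (α+β+1) * (sin (φ/2) ^ γ * cos (φ/2) ^ δ) := by
          field_simp
  · calc 2 ^ (α+β+1) * (sin (φ/2) ^ γ * cos (φ/2) ^ δ)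
        ≤ 2 ^ (α+β+1) * ((max ((π⁻¹:ℝ)^γ) (((2:ℝ)⁻¹)^γ) * φ ^ γ) *
            (max ((π⁻¹:ℝ)^δ) (((2:ℝ)⁻¹)^δ) * (π - φ) ^ δ)) := by
          apply mul_le_mul_of_nonneg_left (mul_le_mul hu1 hu2 hcδ (by positivity)) h2p.le
      _ = _ := by ring

lemma lu_facts {θ r : ℝ} (hθ0 : 0 ≤ θ) (hθπ : θ ≤ π) (hr : 0 < r) (hrπ : r ≤ π) :
    0 ≤ max 0 (θ-r) ∧ max 0 (θ-r) < min π (θ+r) ∧ min π (θ+r) ≤ π ∧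
    (θ+r)/2 ≤ min π (θ+r) ∧ min π (θ+r) ≤ θ+r ∧ θ - r ≤ max 0 (θ-r) ∧
    (π-θ+r)/2 ≤ π - max 0 (θ-r) ∧ π - max 0 (θ-r) ≤ π-θ+r ∧
    r ≤ min π (θ+r) - max 0 (θ-r) ∧ min π (θ+r) - max 0 (θ-r) ≤ 2*r := by
  have hπ := Real.pi_pos
  have hmaxle : max 0 (θ-r) ≤ (π+θ-r)/2 := max_le (by linarith) (by linarith)
  refine ⟨le_max_left _ _,
    lt_min (max_lt hπ (by linarith)) (max_lt (by linarith) (by linarith)),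
    min_le_left _ _, le_min (by linarith) (by linarith), min_le_right _ _,
    le_max_right _ _, by linarith, by linarith [le_max_right 0 (θ-r)], ?_,
    by linarith [min_le_right π (θ+r), le_max_right 0 (θ-r)]⟩
  rcases le_total (θ-r) 0 with h | h
  · rw [max_eq_left h]
    have : r ≤ min π (θ+r) := le_min hrπ (by linarith)
    linarith
  · rw [max_eq_right h]
    have : θ ≤ min π (θ+r) := le_min hθπ (by linarith)
    linarith

lemma ball_repr (α β : ℝ) {x r : ℝ} (hx : x ∈ Set.Icc (-1:ℝ) 1) (hr : 0 < r)
    (hrπ : r ≤ π) :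
    jacobiMeasure α β (jacobiBall x r)
      = ∫⁻ φ in Ioo (max 0 (Real.arccos x - r)) (min π (Real.arccos x + r)),
          ENNReal.ofReal (g α β φ) := by
  have hπ := Real.pi_pos
  set θ := Real.arccos x with hθ
  have hθ0 : 0 ≤ θ := Real.arccos_nonneg x
  have hθπ : θ ≤ π := Real.arccos_le_pi x
  obtain ⟨hl0, hlu, huπ, -, hu2, hl2, -, -, -, -⟩ := lu_facts hθ0 hθπ hr hrπ
  set l := max 0 (θ - r) with hldef
  set u := min π (θ + r) with hudef
  set a := Real.cos u with ha
  set b := Real.cos l with hb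
  have hab : a ≤ b := Real.cos_le_cos_of_nonneg_of_le_pi hl0 huπ hlu.le
  have ha1 : -1 ≤ a := Real.neg_one_le_cos u
  have hb1 : b ≤ 1 := Real.cos_le_one l
  have hIccsub : Set.Icc a b ⊆ Set.Icc (-1:ℝ) 1 := Set.Icc_subset_Icc ha1 hb1
  -- the ball is squeezed between Ioo a b and Icc a b
  have h1 : Set.Ioo a b ⊆ jacobiBall x r := by
    rintro y ⟨hya, hyb⟩
    have hy : y ∈ Set.Icc (-1:ℝ) 1 := hIccsub ⟨hya.le, hyb.le⟩
    have ht1 : Real.arccos y < u := by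
      have := Real.strictAntiOn_arccos (mem_Icc.2 ⟨by linarith, by linarith⟩)
        (mem_Icc.2 ⟨hy.1, hy.2⟩) hya
      rwa [ha, Real.arccos_cos (by linarith) huπ] at this
    have ht2 : l < Real.arccos y := by
      have := Real.strictAntiOn_arccos (mem_Icc.2 ⟨hy.1, hy.2⟩)
        (mem_Icc.2 ⟨by linarith, by linarith⟩) hyb
      rwa [hb, Real.arccos_cos hl0 (by linarith)] at this
    exact ⟨hy, abs_sub_lt_iff.2 ⟨by linarith, by linarith⟩⟩
  have h2 : jacobiBall x r ⊆ Set.Icc a b := by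
    rintro y ⟨hy, habs⟩
    obtain ⟨habs1, habs2⟩ := abs_sub_lt_iff.1 habs
    have hay0 : 0 ≤ Real.arccos y := Real.arccos_nonneg y
    have hayπ : Real.arccos y ≤ π := Real.arccos_le_pi y
    have hlt : l ≤ Real.arccos y := max_le hay0 (by linarith)
    have htu : Real.arccos y ≤ u := le_min hayπ (by linarith)
    have hcy : Real.cos (Real.arccos y) = y := Real.cos_arccos hy.1 hy.2
    constructor
    · rw [ha, ← hcy]; exact Real.cos_le_cos_of_nonneg_of_le_pi (by linarith) huπ htu
    · rw [hb, ← hcy]; exact Real.cos_le_cos_of_nonneg_of_le_pi hl0 (by linarith) hlt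
  -- null endpoints
  have hnull : jacobiMeasure α β (Set.Icc a b \ Set.Ioo a b) = 0 := by
    have hAB : Set.Icc a b \ Set.Ioo a b ⊆ ({a, b} : Set ℝ) := by
      intro y hy
      rcases le_or_gt y a with h' | h'
      · exact Or.inl (le_antisymm h' hy.1.1)
      · rcases lt_or_ge y b with h'' | h''
        · exact absurd ⟨h', h''⟩ hy.2
        · exact Or.inr (le_antisymm hy.1.2 h'')
    have h0 : jacobiMeasure α β ({a, b} : Set ℝ) = 0 := by
      apply (withDensity_absolutelyContinuous _ _)
      rw [Measure.restrict_apply₀' measurableSet_Icc.nullMeasurableSet]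
      exact measure_mono_null Set.inter_subset_left (((Set.finite_singleton b).insert a).measure_zero _)
    exact measure_mono_null hAB h0
  have hball : jacobiMeasure α β (jacobiBall x r) = jacobiMeasure α β (Set.Ioo a b) := by
    apply le_antisymm
    · calc jacobiMeasure α β (jacobiBall x r) ≤ jacobiMeasure α β (Set.Icc a b) :=
        measure_mono h2
      _ ≤ jacobiMeasure α β (Set.Ioo a b) + jacobiMeasure α β (Set.Icc a b \ Set.Ioo a b) := by
          conv_lhs => rw [← Set.union_diff_cancel (Set.Ioo_subset_Icc_self (a := a) (b := b))]
          exact measure_union_le _ _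
      _ = jacobiMeasure α β (Set.Ioo a b) := by rw [hnull, add_zero]
    · exact measure_mono h1
  rw [hball]
  -- image description
  have himg : Set.Ioo a b = Real.cos '' Set.Ioo l u := by
    apply Set.Subset.antisymm
    · rintro y ⟨hya, hyb⟩
      have hy : y ∈ Set.Icc (-1:ℝ) 1 := hIccsub ⟨hya.le, hyb.le⟩
      have hcy : Real.cos (Real.arccos y) = y := Real.cos_arccos hy.1 hy.2
      refine ⟨Real.arccos y, ⟨?_, ?_⟩, hcy⟩
      · have := Real.strictAntiOn_arccos (mem_Icc.2 ⟨hy.1, hy.2⟩)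
          (mem_Icc.2 ⟨by linarith [Real.neg_one_le_cos l], by linarith [Real.cos_le_one l]⟩) hyb
        rwa [Real.arccos_cos hl0 (by linarith)] at this
      · have := Real.strictAntiOn_arccos
          (mem_Icc.2 ⟨by linarith [Real.neg_one_le_cos u], by linarith [Real.cos_le_one u]⟩)
          (mem_Icc.2 ⟨hy.1, hy.2⟩) hya
        rwa [Real.arccos_cos (by linarith) huπ] at this
    · rintro y ⟨t, ⟨htl, htu⟩, rfl⟩
      exact ⟨Real.cos_lt_cos_of_nonneg_of_le_pi (by linarith) huπ htu,
        Real.cos_lt_cos_of_nonneg_of_le_pi hl0 (by linarith) htl⟩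
  -- unfold the measure on Ioo a b
  have hsub' : Set.Ioo a b ⊆ Set.Icc (-1:ℝ) 1 := fun y hy => hIccsub (Set.Ioo_subset_Icc_self hy)
  rw [jacobiMeasure, withDensity_apply _ measurableSet_Ioo,
    Measure.restrict_restrict measurableSet_Ioo, Set.inter_eq_left.2 hsub', himg]
  rw [lintegral_image_eq_lintegral_abs_deriv_mul' measurableSet_Ioo
    (fun t _ => (Real.hasDerivAt_cos t).hasDerivWithinAt)
    (Real.injOn_cos.mono (fun t ⟨h1', h2'⟩ => ⟨by linarith, by linarith⟩))]
  apply setLIntegral_congr_fun measurableSet_Ioo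
  rintro t ⟨htl, htu⟩
  have hsin : 0 ≤ Real.sin t := Real.sin_nonneg_of_nonneg_of_le_pi (by linarith) (by linarith)
  dsimp only
  rw [abs_neg, abs_of_nonneg hsin, g, ← ENNReal.ofReal_mul hsin]


lemma key_upper {γ : ℝ} (hγ : -1 < γ) :
    ∃ c : ℝ, 0 < c ∧ ∀ θ r : ℝ, θ ∈ Set.Icc 0 π → 0 < r → r ≤ π →
      ∫⁻ φ in Ioo (max 0 (θ - r)) (min π (θ + r)) ∩ Iic (π/2),
          ENNReal.ofReal (φ ^ γ)
        ≤ ENNReal.ofReal (c * (r * (θ + r) ^ γ)) := by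
  have hπ := Real.pi_pos
  have hγ1 : (0:ℝ) < γ + 1 := by linarith
  have hpos : (0:ℝ) < 2 + 2 * 3^(-γ) + 3 * 2^(-γ) / (γ+1) := by
    have h1 : (0:ℝ) < 2 * 3^(-γ) := by positivity
    have h2 : (0:ℝ) < 3 * 2^(-γ) / (γ+1) := div_pos (by positivity) hγ1
    linarith
  refine ⟨2 + 2 * 3^(-γ) + 3 * 2^(-γ) / (γ+1), hpos, ?_⟩
  rintro θ r ⟨hθ0, hθπ⟩ hr hrπ
  obtain ⟨hl0, hlu, huπ, hu1, hu2, hl2, -, -, -, hud⟩ := lu_facts hθ0 hθπ hr hrπ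
  set l := max 0 (θ - r) with hldef
  set u := min π (θ + r) with hudef
  have hP : 0 < θ + r := by linarith
  have hPγ : (0:ℝ) ≤ (θ+r)^γ := Real.rpow_nonneg hP.le γ
  have hvol : volume (Ioo l u ∩ Iic (π/2)) ≤ ENNReal.ofReal (2*r) := by
    refine le_trans (measure_mono Set.inter_subset_left) ?_
    rw [Real.volume_Ioo]
    exact ENNReal.ofReal_le_ofReal (by linarith)
  have main : ∫⁻ φ in Ioo l u ∩ Iic (π/2), ENNReal.ofReal (φ ^ γ)
      ≤ ENNReal.ofReal ((2 + 2 * 3^(-γ) + 3 * 2^(-γ) / (γ+1)) * (r * (θ + r) ^ γ)) := by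
    rcases le_or_gt 0 γ with hγ0 | hγ0
    · -- γ ≥ 0 : pointwise bound
      calc ∫⁻ φ in Ioo l u ∩ Iic (π/2), ENNReal.ofReal (φ ^ γ)
          ≤ ∫⁻ _ in Ioo l u ∩ Iic (π/2), ENNReal.ofReal ((θ+r) ^ γ) := by
            apply setLIntegral_mono measurable_const
            rintro φ ⟨⟨hφl, hφu⟩, -⟩
            exact ENNReal.ofReal_le_ofReal
              (Real.rpow_le_rpow (by linarith) (by linarith) hγ0)
        _ = ENNReal.ofReal ((θ+r) ^ γ) * volume (Ioo l u ∩ Iic (π/2)) :=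
            setLIntegral_const _ _
        _ ≤ ENNReal.ofReal ((θ+r) ^ γ) * ENNReal.ofReal (2*r) :=
            mul_le_mul_right hvol _
        _ = ENNReal.ofReal (2 * (r * (θ+r)^γ)) := by
            rw [← ENNReal.ofReal_mul hPγ]; ring_nf
        _ ≤ _ := by
            apply ENNReal.ofReal_le_ofReal
            apply mul_le_mul_of_nonneg_right _ (by positivity)
            have h3 : (0:ℝ) < 3^(-γ) := by positivity
            have h4 : (0:ℝ) ≤ 3 * 2^(-γ)/(γ+1) := by positivity
            linarith
    · rcases le_or_gt (2*r) θ with hcase | hcase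
      · -- θ ≥ 2r : φ ≥ (θ+r)/3 pointwise
        have hlr : l = θ - r := max_eq_right (by linarith)
        calc ∫⁻ φ in Ioo l u ∩ Iic (π/2), ENNReal.ofReal (φ ^ γ)
            ≤ ∫⁻ _ in Ioo l u ∩ Iic (π/2), ENNReal.ofReal (3^(-γ) * (θ+r) ^ γ) := by
              apply setLIntegral_mono measurable_const
              rintro φ ⟨⟨hφl, hφu⟩, -⟩
              apply ENNReal.ofReal_le_ofReal
              have h13 : (θ+r)/3 ≤ φ := by rw [hlr] at hφl; linarith
              have : φ ^ γ ≤ ((θ+r)/3) ^ γ :=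
                Real.rpow_le_rpow_of_nonpos (by linarith) h13 hγ0.le
              calc φ ^ γ ≤ ((θ+r)/3) ^ γ := this
                _ = 3^(-γ) * (θ+r) ^ γ := by
                    rw [Real.div_rpow hP.le (by norm_num), Real.rpow_neg (by norm_num),
                      div_eq_mul_inv, mul_comm]
          _ = ENNReal.ofReal (3^(-γ) * (θ+r) ^ γ) * volume (Ioo l u ∩ Iic (π/2)) :=
              setLIntegral_const _ _
          _ ≤ ENNReal.ofReal (3^(-γ) * (θ+r) ^ γ) * ENNReal.ofReal (2*r) :=
              mul_le_mul_right hvol _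
          _ = ENNReal.ofReal (2 * 3^(-γ) * (r * (θ+r)^γ)) := by
              rw [← ENNReal.ofReal_mul (by positivity)]; ring_nf
          _ ≤ _ := by
              apply ENNReal.ofReal_le_ofReal
              apply mul_le_mul_of_nonneg_right _ (by positivity)
              have h4 : (0:ℝ) ≤ 3 * 2^(-γ)/(γ+1) := by positivity
              linarith
      · -- θ < 2r : integrate the power (case B)
        have hu3 : u ≤ 3*r := le_trans hu2 (by linarith)
        have hInt : IntegrableOn (fun φ : ℝ => φ ^ γ) (Ioo 0 u) volume := by
          exact (intervalIntegral.intervalIntegrable_rpow' hγ (a := 0) (b := u)).1.mono_set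
            Set.Ioo_subset_Ioc_self
        have hIoc : ∫ φ in Ioo (0:ℝ) u, φ ^ γ = u^(γ+1)/(γ+1) := by
          rw [← integral_Ioc_eq_integral_Ioo,
            ← intervalIntegral.integral_of_le (by linarith : (0:ℝ) ≤ u),
            integral_rpow (Or.inl hγ), Real.zero_rpow (by linarith), sub_zero]
        calc ∫⁻ φ in Ioo l u ∩ Iic (π/2), ENNReal.ofReal (φ ^ γ)
            ≤ ∫⁻ φ in Ioo 0 u, ENNReal.ofReal (φ ^ γ) := by
              apply lintegral_mono_set
              rintro φ ⟨⟨hφl, hφu⟩, -⟩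
              exact ⟨lt_of_le_of_lt hl0 hφl, hφu⟩
          _ = ENNReal.ofReal (∫ φ in Ioo 0 u, φ ^ γ) := by
              rw [ofReal_integral_eq_lintegral_ofReal hInt]
              filter_upwards [ae_restrict_mem measurableSet_Ioo] with φ hφ
              exact Real.rpow_nonneg hφ.1.le γ
          _ ≤ _ := by
              apply ENNReal.ofReal_le_ofReal
              rw [hIoc]
              have hu0 : 0 < u := lt_of_le_of_lt hl0 hlu
              have huu : u^(γ+1) = u^γ * u := Real.rpow_add_one hu0.ne' γ
              have huγ : u^γ ≤ 2^(-γ) * (θ+r)^γ := by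
                have : (θ+r)/2 ≤ u := hu1
                calc u^γ ≤ ((θ+r)/2)^γ :=
                    Real.rpow_le_rpow_of_nonpos (by linarith) hu1 hγ0.le
                  _ = 2^(-γ) * (θ+r)^γ := by
                    rw [Real.div_rpow hP.le (by norm_num), Real.rpow_neg (by norm_num),
                      div_eq_mul_inv, mul_comm]
              rw [div_le_iff₀ hγ1]
              have h1 : u^(γ+1) ≤ 2^(-γ) * (θ+r)^γ * (3*r) := by
                rw [huu]
                apply mul_le_mul huγ hu3 hu0.le (by positivity)
              have h3 : (0:ℝ) ≤ r * (θ+r)^γ := by positivity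
              have hdc : 3 * 2^(-γ)/(γ+1)*(γ+1) = 3*2^(-γ) := div_mul_cancel₀ _ hγ1.ne'
              have h5 : (0:ℝ) ≤ (2+2*3^(-γ)) * (γ+1) * (r * (θ+r)^γ) :=
                mul_nonneg (mul_nonneg (by positivity) hγ1.le) h3
              nlinarith [h1]
  exact main

lemma core_upper {γ δ : ℝ} (hγ : -1 < γ) (hδ : -1 < δ) :
    ∃ c : ℝ, 0 < c ∧ ∀ θ r : ℝ, θ ∈ Set.Icc 0 π → 0 < r → r ≤ π →
      ∫⁻ φ in Ioo (max 0 (θ-r)) (min π (θ+r)), ENNReal.ofReal (φ^γ * (π-φ)^δ)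
        ≤ ENNReal.ofReal (c * (r * (θ+r)^γ * (π-θ+r)^δ)) := by
  have hπ := Real.pi_pos
  obtain ⟨cu, hcu, keyγ⟩ := key_upper hγ
  obtain ⟨cv, hcv, keyδ⟩ := key_upper hδ
  set M₁ := max ((4:ℝ)⁻¹ ^ δ) ((2:ℝ) ^ δ) with hM₁
  set M₂ := max ((4:ℝ)⁻¹ ^ γ) ((1:ℝ) ^ γ) with hM₂
  have hM₁p : 0 < M₁ := lt_max_of_lt_left (by positivity)
  have hM₂p : 0 < M₂ := lt_max_of_lt_left (by positivity)
  refine ⟨M₁ * cu + M₂ * cv, by positivity, ?_⟩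
  rintro θ r hθ hr hrπ
  obtain ⟨hθ0, hθπ⟩ := hθ
  obtain ⟨hl0, hlu, huπ, hu1, hu2, hl2, -, -, -, -⟩ := lu_facts hθ0 hθπ hr hrπ
  set l := max 0 (θ-r) with hldef
  set u := min π (θ+r) with hudef
  have hP : 0 < θ + r := by linarith
  have hQ : 0 < π - θ + r := by linarith
  have hPγ : (0:ℝ) ≤ (θ+r)^γ := Real.rpow_nonneg hP.le γ
  have hQδ : (0:ℝ) ≤ (π-θ+r)^δ := Real.rpow_nonneg hQ.le δ
  have hmγ : Measurable fun φ : ℝ => ENNReal.ofReal (φ ^ γ) :=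
    ENNReal.measurable_ofReal.comp (measurable_id.pow measurable_const)
  have hmδ : Measurable fun φ : ℝ => ENNReal.ofReal ((π - φ) ^ δ) :=
    ENNReal.measurable_ofReal.comp ((measurable_const.sub measurable_id).pow measurable_const)
  -- split the interval at π/2
  have hsplit : (Ioo l u : Set ℝ) = (Ioo l u ∩ Iic (π/2)) ∪ (Ioo l u ∩ Ioi (π/2)) := by
    rw [← Set.inter_union_distrib_left, Set.Iic_union_Ioi, Set.inter_univ]
  have hdisj : Disjoint (Ioo l u ∩ Iic (π/2)) (Ioo l u ∩ Ioi (π/2)) :=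
    Disjoint.mono Set.inter_subset_right Set.inter_subset_right
      (Set.Iic_disjoint_Ioi le_rfl)
  rw [hsplit, lintegral_union (measurableSet_Ioo.inter measurableSet_Ioi) hdisj]
  -- piece 1
  have piece1 : ∫⁻ φ in Ioo l u ∩ Iic (π/2), ENNReal.ofReal (φ^γ * (π-φ)^δ)
      ≤ ENNReal.ofReal (M₁ * cu * (r * (θ+r)^γ * (π-θ+r)^δ)) := by
    calc ∫⁻ φ in Ioo l u ∩ Iic (π/2), ENNReal.ofReal (φ^γ * (π-φ)^δ)
        ≤ ∫⁻ φ in Ioo l u ∩ Iic (π/2),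
            ENNReal.ofReal (M₁ * (π-θ+r)^δ) * ENNReal.ofReal (φ^γ) := by
          apply setLIntegral_mono (measurable_const.mul hmγ)
          rintro φ ⟨⟨hφl, hφu⟩, hφh⟩
          have hφh' : φ ≤ π/2 := hφh
          rw [Pi.mul_apply, ← ENNReal.ofReal_mul (by positivity)]
          apply ENNReal.ofReal_le_ofReal
          have hres : (π - φ) ^ δ ≤ M₁ * (π-θ+r)^δ := by
            have hb1 : (4:ℝ)⁻¹ * (π-θ+r) ≤ π - φ := by linarith
            have hb2 : π - φ ≤ 2 * (π-θ+r) := by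
              have : θ - r ≤ l := hl2
              have : θ - r < π/2 := by linarith
              linarith
            exact ratio_rpow (by norm_num) hQ hb1 hb2
          have hφγ : (0:ℝ) ≤ φ ^ γ := Real.rpow_nonneg (by linarith) γ
          calc φ^γ * (π-φ)^δ ≤ φ^γ * (M₁ * (π-θ+r)^δ) :=
              mul_le_mul_of_nonneg_left hres hφγ
            _ = M₁ * (π-θ+r)^δ * φ^γ := by ring
      _ = ENNReal.ofReal (M₁ * (π-θ+r)^δ) * ∫⁻ φ in Ioo l u ∩ Iic (π/2),
            ENNReal.ofReal (φ^γ) := lintegral_const_mul _ hmγ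
      _ ≤ ENNReal.ofReal (M₁ * (π-θ+r)^δ) * ENNReal.ofReal (cu * (r * (θ+r)^γ)) :=
          mul_le_mul_right (keyγ θ r ⟨hθ0, hθπ⟩ hr hrπ) _
      _ = ENNReal.ofReal (M₁ * cu * (r * (θ+r)^γ * (π-θ+r)^δ)) := by
          rw [← ENNReal.ofReal_mul (by positivity)]
          ring_nf
  -- piece 2 via reflection
  have hA : max 0 ((π-θ) - r) = π - u := by
    rcases le_total π (θ+r) with h | h
    · rw [hudef, min_eq_left h, max_eq_left (by linarith)]; ring
    · rw [hudef, min_eq_right h, max_eq_right (by linarith)]; ring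
  have hB : min π ((π-θ) + r) = π - l := by
    rcases le_total (θ-r) 0 with h | h
    · rw [hldef, max_eq_left h, min_eq_left (by linarith)]; ring
    · rw [hldef, max_eq_right h, min_eq_right (by linarith)]; ring
  have piece2 : ∫⁻ φ in Ioo l u ∩ Ioi (π/2), ENNReal.ofReal (φ^γ * (π-φ)^δ)
      ≤ ENNReal.ofReal (M₂ * cv * (r * (θ+r)^γ * (π-θ+r)^δ)) := by
    calc ∫⁻ φ in Ioo l u ∩ Ioi (π/2), ENNReal.ofReal (φ^γ * (π-φ)^δ)
        ≤ ∫⁻ φ in Ioo l u ∩ Ioi (π/2),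
            ENNReal.ofReal (M₂ * (θ+r)^γ) * ENNReal.ofReal ((π-φ)^δ) := by
          apply setLIntegral_mono (measurable_const.mul hmδ)
          rintro φ ⟨⟨hφl, hφu⟩, hφh⟩
          rw [Pi.mul_apply, ← ENNReal.ofReal_mul (by positivity)]
          apply ENNReal.ofReal_le_ofReal
          have hres : φ ^ γ ≤ M₂ * (θ+r)^γ := by
            have hb1 : (4:ℝ)⁻¹ * (θ+r) ≤ φ := by
              simp only [Set.mem_Ioi] at hφh
              linarith
            have hb2 : φ ≤ 1 * (θ+r) := by rw [one_mul]; linarith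
            exact ratio_rpow (by norm_num) hP hb1 hb2
          have hπφδ : (0:ℝ) ≤ (π - φ) ^ δ := Real.rpow_nonneg (by linarith) δ
          calc φ^γ * (π-φ)^δ ≤ (M₂ * (θ+r)^γ) * (π-φ)^δ :=
              mul_le_mul_of_nonneg_right hres hπφδ
            _ = M₂ * (θ+r)^γ * (π-φ)^δ := by ring
      _ = ENNReal.ofReal (M₂ * (θ+r)^γ) * ∫⁻ φ in Ioo l u ∩ Ioi (π/2),
            ENNReal.ofReal ((π-φ)^δ) := lintegral_const_mul _ hmδ
      _ ≤ ENNReal.ofReal (M₂ * (θ+r)^γ) * ENNReal.ofReal (cv * (r * (π-θ+r)^δ)) := by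
          apply mul_le_mul_right
          -- change variables ψ = π - φ
          have hpre : (Ioo l u ∩ Ioi (π/2) : Set ℝ)
              = (fun ψ : ℝ => π - ψ) ⁻¹'
                (Ioo (max 0 ((π-θ) - r)) (min π ((π-θ) + r)) ∩ Iio (π/2)) := by
            rw [hA, hB]
            ext φ
            simp only [Set.mem_inter_iff, Set.mem_Ioo, Set.mem_Ioi, Set.mem_Iio,
              Set.mem_preimage]
            constructor
            · rintro ⟨⟨h1', h2'⟩, h3'⟩
              exact ⟨⟨by linarith, by linarith⟩, by linarith⟩
            · rintro ⟨⟨h1', h2'⟩, h3'⟩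
              exact ⟨⟨by linarith, by linarith⟩, by linarith⟩
          have hrefl : ∫⁻ φ in Ioo l u ∩ Ioi (π/2), ENNReal.ofReal ((π-φ)^δ)
              = ∫⁻ ψ in Ioo (max 0 ((π-θ) - r)) (min π ((π-θ) + r)) ∩ Iio (π/2),
                  ENNReal.ofReal (ψ^δ) := by
            rw [hpre]
            exact (Measure.measurePreserving_sub_left volume π).setLIntegral_comp_preimage_emb
              (MeasurableEquiv.subLeft π).measurableEmbedding
              (fun ψ => ENNReal.ofReal (ψ^δ)) _
          rw [hrefl]
          calc ∫⁻ ψ in Ioo (max 0 ((π-θ) - r)) (min π ((π-θ) + r)) ∩ Iio (π/2),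
                ENNReal.ofReal (ψ^δ)
              ≤ ∫⁻ ψ in Ioo (max 0 ((π-θ) - r)) (min π ((π-θ) + r)) ∩ Iic (π/2),
                ENNReal.ofReal (ψ^δ) := lintegral_mono_set
                  (Set.inter_subset_inter_right _ Set.Iio_subset_Iic_self)
            _ ≤ ENNReal.ofReal (cv * (r * ((π-θ) + r) ^ δ)) :=
                keyδ (π-θ) r ⟨by linarith, by linarith⟩ hr hrπ
            _ = ENNReal.ofReal (cv * (r * (π-θ+r) ^ δ)) := by ring_nf
      _ = ENNReal.ofReal (M₂ * cv * (r * (θ+r)^γ * (π-θ+r)^δ)) := by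
          rw [← ENNReal.ofReal_mul (by positivity)]
          ring_nf
  calc _ ≤ ENNReal.ofReal (M₁ * cu * (r * (θ+r)^γ * (π-θ+r)^δ))
        + ENNReal.ofReal (M₂ * cv * (r * (θ+r)^γ * (π-θ+r)^δ)) := add_le_add piece1 piece2
    _ = ENNReal.ofReal ((M₁ * cu + M₂ * cv) * (r * (θ+r)^γ * (π-θ+r)^δ)) := by
        rw [← ENNReal.ofReal_add (by positivity) (by positivity)]
        ring_nf


lemma core_lower {γ δ : ℝ} :
    ∃ c : ℝ, 0 < c ∧ ∀ θ r : ℝ, θ ∈ Set.Icc 0 π → 0 < r → r ≤ π →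
      ENNReal.ofReal (c * (r * (θ+r)^γ * (π-θ+r)^δ))
        ≤ ∫⁻ φ in Ioo (max 0 (θ-r)) (min π (θ+r)), ENNReal.ofReal (φ^γ * (π-φ)^δ) := by
  have hπ := Real.pi_pos
  set m₁ := min 1 ((8:ℝ)^(-γ)) with hm₁
  set m₂ := min 1 ((8:ℝ)^(-δ)) with hm₂
  have hm₁p : 0 < m₁ := lt_min one_pos (by positivity)
  have hm₂p : 0 < m₂ := lt_min one_pos (by positivity)
  refine ⟨m₁ * m₂ / 4, by positivity, ?_⟩
  rintro θ r ⟨hθ0, hθπ⟩ hr hrπ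
  obtain ⟨hl0, hlu, huπ, hu1, hu2, hl2, hQ1, hQ2, hul1, -⟩ := lu_facts hθ0 hθπ hr hrπ
  set l := max 0 (θ-r) with hldef
  set u := min π (θ+r) with hudef
  clear_value l u
  set p := (l+u)/2 - r/8 with hpdef
  set q := (l+u)/2 + r/8 with hqdef
  clear_value p q
  have hP : 0 < θ + r := by linarith
  have hQ : 0 < π - θ + r := by linarith
  have hpl : l ≤ p := by rw [hpdef]; linarith
  have hqu : q ≤ u := by rw [hqdef]; linarith
  have hrP : r ≤ θ + r := by linarith
  have hrQ : r ≤ π - θ + r := by linarith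
  have hpP : (θ+r)/8 ≤ p := by rw [hpdef]; linarith
  have hqQ : (π-θ+r)/8 ≤ π - q := by rw [hqdef]; linarith
  have hsub : Ioo p q ⊆ Ioo l u := Set.Ioo_subset_Ioo hpl hqu
  have key : ENNReal.ofReal (m₁ * m₂ / 4 * (r * (θ+r)^γ * (π-θ+r)^δ))
      ≤ ∫⁻ φ in Ioo p q, ENNReal.ofReal (φ^γ * (π-φ)^δ) := by
    have hKnn : (0:ℝ) ≤ m₁ * (θ+r)^γ * (m₂ * (π-θ+r)^δ) := by positivity
    calc ENNReal.ofReal (m₁ * m₂ / 4 * (r * (θ+r)^γ * (π-θ+r)^δ))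
        = ENNReal.ofReal (m₁ * (θ+r)^γ * (m₂ * (π-θ+r)^δ)) * ENNReal.ofReal (q - p) := by
          rw [← ENNReal.ofReal_mul hKnn]
          congr 1
          rw [hqdef, hpdef]
          ring
      _ = ENNReal.ofReal (m₁ * (θ+r)^γ * (m₂ * (π-θ+r)^δ)) * volume (Ioo p q) := by
          rw [Real.volume_Ioo]
      _ = ∫⁻ _ in Ioo p q, ENNReal.ofReal (m₁ * (θ+r)^γ * (m₂ * (π-θ+r)^δ)) :=
          (setLIntegral_const _ _).symm
      _ ≤ ∫⁻ φ in Ioo p q, ENNReal.ofReal (φ^γ * (π-φ)^δ) := by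
          apply setLIntegral_mono
          · exact ENNReal.measurable_ofReal.comp
              ((measurable_id.pow measurable_const).mul
                ((measurable_const.sub measurable_id).pow measurable_const))
          rintro φ ⟨hφp, hφq⟩
          apply ENNReal.ofReal_le_ofReal
          have h1 : m₁ * (θ+r)^γ ≤ φ^γ := low_pt hP (by linarith) (by linarith)
          have h2 : m₂ * (π-θ+r)^δ ≤ (π-φ)^δ := low_pt hQ (by linarith) (by linarith)
          exact mul_le_mul h1 h2 (by positivity) (Real.rpow_nonneg (by linarith) γ)
  exact key.trans (lintegral_mono_set hsub)


lemma base_low {s θ r : ℝ} (hθ0 : 0 ≤ θ) (hr : 0 ≤ r) (hs : θ/π ≤ s) :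
    (π^2)⁻¹ * (θ+r)^2 ≤ 2*s^2 + r^2 := by
  have hπ := Real.pi_pos
  have hπ3 := Real.pi_gt_three
  rw [inv_mul_le_iff₀ (by positivity)]
  have h1 : θ ≤ s * π := (div_le_iff₀ hπ).1 hs
  have hs0 : 0 ≤ s := le_trans (by positivity) hs
  have h2 : θ^2 ≤ (s*π)^2 := pow_le_pow_left₀ hθ0 h1 2
  have h3 : (9:ℝ) ≤ π^2 := by nlinarith
  nlinarith [sq_nonneg (θ - r), h2, h3, sq_nonneg r]

lemma base_up {s θ r : ℝ} (hθ0 : 0 ≤ θ) (hr : 0 ≤ r) (hs0 : 0 ≤ s) (hs : s ≤ θ/2) :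
    2*s^2 + r^2 ≤ 1 * (θ+r)^2 := by
  nlinarith [pow_le_pow_left₀ hs0 hs 2, mul_nonneg hθ0 hr]

lemma main_enn (α β : ℝ) (hα : -1 < α) (hβ : -1 < β) :
    ∃ d₁ d₂ : ℝ, 0 < d₁ ∧ 0 < d₂ ∧ ∀ x ∈ Set.Icc (-1:ℝ) 1, ∀ r : ℝ, 0 < r → r ≤ π →
      ENNReal.ofReal (d₁ * (r * (1 - x + r^2) ^ (α + 1/2) * (1 + x + r^2) ^ (β + 1/2)))
          ≤ jacobiMeasure α β (jacobiBall x r) ∧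
      jacobiMeasure α β (jacobiBall x r)
          ≤ ENNReal.ofReal (d₂ * (r * (1 - x + r^2) ^ (α + 1/2) * (1 + x + r^2) ^ (β + 1/2))) := by
  have hπ := Real.pi_pos
  have hπ3 := Real.pi_gt_three
  have hγ : (-1:ℝ) < 2*α+1 := by linarith
  have hδ : (-1:ℝ) < 2*β+1 := by linarith
  obtain ⟨k₁, k₂, hk₁, hk₂, hg⟩ := g_comp α β
  obtain ⟨cl, hcl, hcore_l⟩ := core_lower (γ := 2*α+1) (δ := 2*β+1)
  obtain ⟨cuu, hcuu, hcore_u⟩ := core_upper hγ hδ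
  set e₁ := α + 1/2 with he₁
  set e₂ := β + 1/2 with he₂
  set N₁ := max ((1:ℝ)^e₁) ((π^2)^e₁) with hN₁def
  set N₂ := max ((1:ℝ)^e₂) ((π^2)^e₂) with hN₂def
  set M₁ := max (((π^2)⁻¹:ℝ)^e₁) ((1:ℝ)^e₁) with hM₁def
  set M₂ := max (((π^2)⁻¹:ℝ)^e₂) ((1:ℝ)^e₂) with hM₂def
  have hN₁p : 0 < N₁ := lt_max_of_lt_left (by positivity)
  have hN₂p : 0 < N₂ := lt_max_of_lt_left (by positivity)
  have hM₁p : 0 < M₁ := lt_max_of_lt_left (by positivity)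
  have hM₂p : 0 < M₂ := lt_max_of_lt_left (by positivity)
  refine ⟨k₁ * cl / (M₁ * M₂), k₂ * cuu * (N₁ * N₂), by positivity, by positivity, ?_⟩
  rintro x hx r hr hrπ
  set θ := Real.arccos x with hθdef
  have hθ0 : 0 ≤ θ := Real.arccos_nonneg x
  have hθπ : θ ≤ π := Real.arccos_le_pi x
  have hxcos : Real.cos θ = x := Real.cos_arccos hx.1 hx.2
  obtain ⟨hl0, hlu, huπ, -, -, -, -, -, -, -⟩ := lu_facts hθ0 hθπ hr hrπ
  have hP : 0 < θ + r := by linarith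
  have hQ : 0 < π - θ + r := by linarith
  -- base comparisons
  obtain ⟨hs1, hs2⟩ := sin_half_bounds hθ0 hθπ
  obtain ⟨hc1, hc2⟩ := cos_half_bounds hθ0 hθπ
  have h1x : 1 - x = 2 * Real.sin (θ/2) ^ 2 := by
    have := Real.sin_sq_eq_half_sub (θ/2)
    rw [show 2 * (θ/2) = θ by ring, hxcos] at this
    linarith
  have h2x : 1 + x = 2 * Real.cos (θ/2) ^ 2 := by
    have := Real.cos_sq (θ/2)
    rw [show 2 * (θ/2) = θ by ring, hxcos] at this
    linarith
  have hsin0 : 0 ≤ Real.sin (θ/2) :=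
    Real.sin_nonneg_of_nonneg_of_le_pi (by linarith) (by linarith)
  have hcos0 : 0 ≤ Real.cos (θ/2) := Real.cos_nonneg_of_mem_Icc ⟨by linarith, by linarith⟩
  have hA1l : (π^2)⁻¹ * (θ+r)^2 ≤ 1 - x + r^2 := by
    rw [h1x]; exact base_low hθ0 hr.le hs1
  have hA1u : 1 - x + r^2 ≤ 1 * (θ+r)^2 := by
    rw [h1x]; exact base_up hθ0 hr.le hsin0 hs2
  have hA2l : (π^2)⁻¹ * (π-θ+r)^2 ≤ 1 + x + r^2 := by
    rw [h2x]; exact base_low (by linarith) hr.le hc1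
  have hA2u : 1 + x + r^2 ≤ 1 * (π-θ+r)^2 := by
    rw [h2x]; exact base_up (by linarith) hr.le hcos0 hc2
  have hA1p : 0 < 1 - x + r^2 := lt_of_lt_of_le (by positivity) hA1l
  have hA2p : 0 < 1 + x + r^2 := lt_of_lt_of_le (by positivity) hA2l
  -- power bridging
  have hpow : ∀ t : ℝ, 0 < t → ∀ e : ℝ, (t^2) ^ e = t ^ (2*e) := by
    intro t ht e
    rw [← Real.rpow_natCast t 2, ← Real.rpow_mul ht.le]
    norm_num [mul_comm]
  have hPγ : ((θ+r)^2) ^ e₁ = (θ+r) ^ (2*α+1) := by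
    rw [hpow _ hP, he₁]; ring_nf
  have hQδ : ((π-θ+r)^2) ^ e₂ = (π-θ+r) ^ (2*β+1) := by
    rw [hpow _ hQ, he₂]; ring_nf
  -- N bounds : P^γ ≤ N₁ * A₁^e₁ , Q^δ ≤ N₂ * A₂^e₂
  have hNb1 : (θ+r) ^ (2*α+1) ≤ N₁ * (1 - x + r^2) ^ e₁ := by
    rw [← hPγ]
    exact ratio_rpow one_pos hA1p (by linarith)
      (by rwa [inv_mul_le_iff₀ (by positivity)] at hA1l)
  have hNb2 : (π-θ+r) ^ (2*β+1) ≤ N₂ * (1 + x + r^2) ^ e₂ := by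
    rw [← hQδ]
    exact ratio_rpow one_pos hA2p (by linarith)
      (by rwa [inv_mul_le_iff₀ (by positivity)] at hA2l)
  -- M bounds : A₁^e₁ ≤ M₁ * P^γ , A₂^e₂ ≤ M₂ * Q^δ
  have hMb1 : (1 - x + r^2) ^ e₁ ≤ M₁ * (θ+r) ^ (2*α+1) := by
    rw [← hPγ]
    exact ratio_rpow (by positivity) (by positivity) hA1l hA1u
  have hMb2 : (1 + x + r^2) ^ e₂ ≤ M₂ * (π-θ+r) ^ (2*β+1) := by
    rw [← hQδ]
    exact ratio_rpow (by positivity) (by positivity) hA2l hA2u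
  -- abbreviations
  have hArp : (0:ℝ) ≤ (1 - x + r^2) ^ e₁ := Real.rpow_nonneg hA1p.le _
  have hArq : (0:ℝ) ≤ (1 + x + r^2) ^ e₂ := Real.rpow_nonneg hA2p.le _
  have hPrp : (0:ℝ) ≤ (θ+r) ^ (2*α+1) := Real.rpow_nonneg hP.le _
  have hQrq : (0:ℝ) ≤ (π-θ+r) ^ (2*β+1) := Real.rpow_nonneg hQ.le _
  have hGle : r * (1 - x + r^2) ^ e₁ * (1 + x + r^2) ^ e₂
      ≤ M₁ * M₂ * (r * (θ+r)^(2*α+1) * (π-θ+r)^(2*β+1)) := by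
    calc r * (1 - x + r^2) ^ e₁ * (1 + x + r^2) ^ e₂
        ≤ r * (M₁ * (θ+r) ^ (2*α+1)) * (M₂ * (π-θ+r) ^ (2*β+1)) := by
          apply mul_le_mul (mul_le_mul_of_nonneg_left hMb1 hr.le) hMb2 hArq (by positivity)
      _ = M₁ * M₂ * (r * (θ+r)^(2*α+1) * (π-θ+r)^(2*β+1)) := by ring
  have hGge : r * (θ+r)^(2*α+1) * (π-θ+r)^(2*β+1)
      ≤ N₁ * N₂ * (r * (1 - x + r^2) ^ e₁ * (1 + x + r^2) ^ e₂) := by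
    calc r * (θ+r)^(2*α+1) * (π-θ+r)^(2*β+1)
        ≤ r * (N₁ * (1 - x + r^2) ^ e₁) * (N₂ * (1 + x + r^2) ^ e₂) := by
          apply mul_le_mul (mul_le_mul_of_nonneg_left hNb1 hr.le) hNb2 hQrq (by positivity)
      _ = N₁ * N₂ * (r * (1 - x + r^2) ^ e₁ * (1 + x + r^2) ^ e₂) := by ring
  -- measurability of the weight in angular coords
  have hmh : Measurable fun φ : ℝ => ENNReal.ofReal (φ^(2*α+1) * (π-φ)^(2*β+1)) :=
    ENNReal.measurable_ofReal.comp ((measurable_id.pow measurable_const).mul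
      ((measurable_const.sub measurable_id).pow measurable_const))
  have hIoosub : Ioo (max 0 (θ-r)) (min π (θ+r)) ⊆ Ioo 0 π := fun φ hφ =>
    ⟨lt_of_le_of_lt hl0 hφ.1, lt_of_lt_of_le hφ.2 huπ⟩
  have hrepr := ball_repr α β hx hr hrπ
  rw [← hθdef] at hrepr
  constructor
  · -- lower bound
    have step1 : ENNReal.ofReal (k₁ * cl / (M₁ * M₂) *
          (r * (1 - x + r^2) ^ e₁ * (1 + x + r^2) ^ e₂))
        ≤ ENNReal.ofReal (k₁ * (cl * (r * (θ+r)^(2*α+1) * (π-θ+r)^(2*β+1)))) := by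
      apply ENNReal.ofReal_le_ofReal
      rw [div_mul_eq_mul_div, div_le_iff₀ (by positivity)]
      calc k₁ * cl * (r * (1 - x + r^2) ^ e₁ * (1 + x + r^2) ^ e₂)
          ≤ k₁ * cl * (M₁ * M₂ * (r * (θ+r)^(2*α+1) * (π-θ+r)^(2*β+1))) :=
            mul_le_mul_of_nonneg_left hGle (by positivity)
        _ = k₁ * (cl * (r * (θ+r)^(2*α+1) * (π-θ+r)^(2*β+1))) * (M₁ * M₂) := by ring
    refine le_trans step1 ?_
    rw [hrepr, ENNReal.ofReal_mul hk₁.le]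
    calc ENNReal.ofReal k₁ * ENNReal.ofReal (cl * (r * (θ+r)^(2*α+1) * (π-θ+r)^(2*β+1)))
        ≤ ENNReal.ofReal k₁ *
            ∫⁻ φ in Ioo (max 0 (θ-r)) (min π (θ+r)),
              ENNReal.ofReal (φ^(2*α+1) * (π-φ)^(2*β+1)) :=
          mul_le_mul_right (hcore_l θ r ⟨hθ0, hθπ⟩ hr hrπ) _
      _ = ∫⁻ φ in Ioo (max 0 (θ-r)) (min π (θ+r)),
            ENNReal.ofReal k₁ * ENNReal.ofReal (φ^(2*α+1) * (π-φ)^(2*β+1)) :=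
          (lintegral_const_mul _ hmh).symm
      _ ≤ ∫⁻ φ in Ioo (max 0 (θ-r)) (min π (θ+r)), ENNReal.ofReal (g α β φ) := by
          apply setLIntegral_mono
          · exact ENNReal.measurable_ofReal.comp
              ((Real.measurable_sin.mul
                (((measurable_const.sub Real.measurable_cos).pow measurable_const).mul
                  ((measurable_const.add Real.measurable_cos).pow measurable_const))))
          intro φ hφ
          rw [← ENNReal.ofReal_mul hk₁.le]
          exact ENNReal.ofReal_le_ofReal (hg φ (hIoosub hφ)).1
  · -- upper bound
    rw [hrepr]
    calc ∫⁻ φ in Ioo (max 0 (θ-r)) (min π (θ+r)), ENNReal.ofReal (g α β φ)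
        ≤ ∫⁻ φ in Ioo (max 0 (θ-r)) (min π (θ+r)),
            ENNReal.ofReal k₂ * ENNReal.ofReal (φ^(2*α+1) * (π-φ)^(2*β+1)) := by
          apply setLIntegral_mono (measurable_const.mul hmh)
          intro φ hφ
          rw [Pi.mul_apply, ← ENNReal.ofReal_mul hk₂.le]
          exact ENNReal.ofReal_le_ofReal (hg φ (hIoosub hφ)).2
      _ = ENNReal.ofReal k₂ * ∫⁻ φ in Ioo (max 0 (θ-r)) (min π (θ+r)),
            ENNReal.ofReal (φ^(2*α+1) * (π-φ)^(2*β+1)) := lintegral_const_mul _ hmh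
      _ ≤ ENNReal.ofReal k₂ *
            ENNReal.ofReal (cuu * (r * (θ+r)^(2*α+1) * (π-θ+r)^(2*β+1))) :=
          mul_le_mul_right (hcore_u θ r ⟨hθ0, hθπ⟩ hr hrπ) _
      _ ≤ ENNReal.ofReal (k₂ * cuu * (N₁ * N₂) *
            (r * (1 - x + r^2) ^ e₁ * (1 + x + r^2) ^ e₂)) := by
          rw [← ENNReal.ofReal_mul hk₂.le]
          apply ENNReal.ofReal_le_ofReal
          calc k₂ * (cuu * (r * (θ+r)^(2*α+1) * (π-θ+r)^(2*β+1)))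
              ≤ k₂ * (cuu * (N₁ * N₂ * (r * (1 - x + r^2) ^ e₁ * (1 + x + r^2) ^ e₂))) := by
                apply mul_le_mul_of_nonneg_left _ hk₂.le
                exact mul_le_mul_of_nonneg_left hGge hcuu.le
            _ = k₂ * cuu * (N₁ * N₂) * (r * (1 - x + r^2) ^ e₁ * (1 + x + r^2) ^ e₂) := by
                ring

end JacobiAux

theorem jacobi_ball_volume (α β : ℝ) (hα : -1 < α) (hβ : -1 < β) :
    ∃ c₁ c₂ : ℝ, 0 < c₁ ∧ 0 < c₂ ∧
      (∀ x ∈ Set.Icc (-1 : ℝ) 1, ∀ r : ℝ, 0 < r → r ≤ Real.pi →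
        c₁ * (jacobiMeasure α β (jacobiBall x r)).toReal
            ≤ r * (1 - x + r ^ 2) ^ (α + 1 / 2) * (1 + x + r ^ 2) ^ (β + 1 / 2) ∧
        r * (1 - x + r ^ 2) ^ (α + 1 / 2) * (1 + x + r ^ 2) ^ (β + 1 / 2)
            ≤ c₂ * (jacobiMeasure α β (jacobiBall x r)).toReal) ∧
      ∃ C : ℝ≥0∞, C < ⊤ ∧ ∀ x ∈ Set.Icc (-1 : ℝ) 1, ∀ r : ℝ, 0 < r →
        jacobiMeasure α β (jacobiBall x (2 * r)) ≤ C * jacobiMeasure α β (jacobiBall x r) := by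
  have hπ := Real.pi_pos
  obtain ⟨d₁, d₂, hd₁, hd₂, hmain⟩ := JacobiAux.main_enn α β hα hβ
  set e₁ := α + 1/2 with he₁
  set e₂ := β + 1/2 with he₂
  -- constants for doubling
  set K := 2 * max ((1:ℝ)^e₁) ((4:ℝ)^e₁) * max ((1:ℝ)^e₂) ((4:ℝ)^e₂) with hKdef
  have hmax1 : (0:ℝ) < max ((1:ℝ)^e₁) ((4:ℝ)^e₁) := lt_max_of_lt_left (by positivity)
  have hmax2 : (0:ℝ) < max ((1:ℝ)^e₂) ((4:ℝ)^e₂) := lt_max_of_lt_left (by positivity)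
  have hKpos : 0 < K := by rw [hKdef]; positivity
  set m₁ := min ((π^2/4)^e₁) ((2+π^2)^e₁) with hm₁def
  set m₂ := min ((π^2/4)^e₂) ((2+π^2)^e₂) with hm₂def
  have hm₁p : 0 < m₁ := lt_min (Real.rpow_pos_of_pos (by positivity) _)
    (Real.rpow_pos_of_pos (by positivity) _)
  have hm₂p : 0 < m₂ := lt_min (Real.rpow_pos_of_pos (by positivity) _)
    (Real.rpow_pos_of_pos (by positivity) _)
  set Gm := π/2 * (m₁ * m₂) with hGmdef
  have hGmp : 0 < Gm := by positivity
  set T := jacobiMeasure α β (Set.Icc (-1:ℝ) 1) with hTdef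
  have hIccBall : Set.Icc (-1:ℝ) 1 = jacobiBall 0 π := by
    ext y
    simp only [jacobiBall, Set.mem_setOf_eq, Real.arccos_zero]
    constructor
    · intro hy
      refine ⟨hy, ?_⟩
      have h0 := Real.arccos_nonneg y
      have h1 := Real.arccos_le_pi y
      rw [abs_lt]
      constructor <;> linarith
    · rintro ⟨hy, -⟩; exact hy
  have hT : T ≠ ⊤ := by
    rw [hTdef, hIccBall]
    exact (lt_of_le_of_lt (hmain 0 (by norm_num) π hπ le_rfl).2 ENNReal.ofReal_lt_top).ne
  set e := ENNReal.ofReal (d₁ * Gm) with hedef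
  have hene0 : e ≠ 0 := (ENNReal.ofReal_pos.2 (by positivity)).ne'
  have henetop : e ≠ ⊤ := ENNReal.ofReal_ne_top
  set C := ENNReal.ofReal (K * d₂ / d₁) + T * e⁻¹ with hCdef
  refine ⟨1/d₂, 1/d₁, by positivity, by positivity, ?_, C, ?_, ?_⟩
  · -- main two-sided estimate
    rintro x hx r hr hrπ
    obtain ⟨hlow, hup⟩ := hmain x hx r hr hrπ
    have hA : 0 < 1 - x + r^2 := by
      have := hx.2
      have := pow_pos hr 2
      linarith
    have hB : 0 < 1 + x + r^2 := by
      have := hx.1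
      have := pow_pos hr 2
      linarith
    have hGnn : 0 ≤ r * (1 - x + r^2) ^ e₁ * (1 + x + r^2) ^ e₂ := by positivity
    have hne : jacobiMeasure α β (jacobiBall x r) ≠ ⊤ :=
      (lt_of_le_of_lt hup ENNReal.ofReal_lt_top).ne
    have ht1 : (jacobiMeasure α β (jacobiBall x r)).toReal
        ≤ d₂ * (r * (1 - x + r^2) ^ e₁ * (1 + x + r^2) ^ e₂) := by
      have := ENNReal.toReal_mono ENNReal.ofReal_ne_top hup
      rwa [ENNReal.toReal_ofReal (by positivity)] at this
    have ht2 : d₁ * (r * (1 - x + r^2) ^ e₁ * (1 + x + r^2) ^ e₂)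
        ≤ (jacobiMeasure α β (jacobiBall x r)).toReal := by
      have := ENNReal.toReal_mono hne hlow
      rwa [ENNReal.toReal_ofReal (by positivity)] at this
    constructor
    · calc (1/d₂) * (jacobiMeasure α β (jacobiBall x r)).toReal
          ≤ (1/d₂) * (d₂ * (r * (1 - x + r^2) ^ e₁ * (1 + x + r^2) ^ e₂)) :=
            mul_le_mul_of_nonneg_left ht1 (by positivity)
        _ = r * (1 - x + r^2) ^ e₁ * (1 + x + r^2) ^ e₂ := by
            field_simp
    · calc r * (1 - x + r^2) ^ e₁ * (1 + x + r^2) ^ e₂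
          = (1/d₁) * (d₁ * (r * (1 - x + r^2) ^ e₁ * (1 + x + r^2) ^ e₂)) := by
            field_simp
        _ ≤ (1/d₁) * (jacobiMeasure α β (jacobiBall x r)).toReal :=
            mul_le_mul_of_nonneg_left ht2 (by positivity)
  · -- C < ⊤
    rw [hCdef]
    exact ENNReal.add_lt_top.2 ⟨ENNReal.ofReal_lt_top,
      (ENNReal.mul_ne_top hT (ENNReal.inv_ne_top.2 hene0)).lt_top⟩
  · -- doubling
    rintro x hx r hr
    have hxA : 0 ≤ 1 - x := by linarith [hx.2]
    have hxB : 0 ≤ 1 + x := by linarith [hx.1]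
    rcases le_or_gt (2*r) π with hcase | hcase
    · -- small radius
      obtain ⟨-, hup2⟩ := hmain x hx (2*r) (by linarith) hcase
      obtain ⟨hlow1, -⟩ := hmain x hx r hr (by linarith)
      have h4r : (2*r)^2 = 4*r^2 := by ring
      have hA : 0 < 1 - x + r^2 := by
        have := pow_pos hr 2
        linarith
      have hB : 0 < 1 + x + r^2 := by
        have := pow_pos hr 2
        linarith
      have hrA1 : (1 - x + (2*r)^2) ^ e₁ ≤ max ((1:ℝ)^e₁) ((4:ℝ)^e₁) * (1 - x + r^2) ^ e₁ := by
        apply JacobiAux.ratio_rpow one_pos hA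
        · rw [one_mul, h4r]
          have := pow_pos hr 2
          linarith
        · rw [h4r]
          linarith [pow_pos hr 2]
      have hrA2 : (1 + x + (2*r)^2) ^ e₂ ≤ max ((1:ℝ)^e₂) ((4:ℝ)^e₂) * (1 + x + r^2) ^ e₂ := by
        apply JacobiAux.ratio_rpow one_pos hB
        · rw [one_mul, h4r]
          have := pow_pos hr 2
          linarith
        · rw [h4r]
          linarith [pow_pos hr 2]
      have hG2 : 2*r * (1 - x + (2*r)^2) ^ e₁ * (1 + x + (2*r)^2) ^ e₂
          ≤ K * (r * (1 - x + r^2) ^ e₁ * (1 + x + r^2) ^ e₂) := by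
        calc 2*r * (1 - x + (2*r)^2) ^ e₁ * (1 + x + (2*r)^2) ^ e₂
            ≤ 2*r * (max ((1:ℝ)^e₁) ((4:ℝ)^e₁) * (1 - x + r^2) ^ e₁)
              * (max ((1:ℝ)^e₂) ((4:ℝ)^e₂) * (1 + x + r^2) ^ e₂) := by
              apply mul_le_mul (mul_le_mul_of_nonneg_left hrA1 (by linarith)) hrA2
                (Real.rpow_nonneg (by nlinarith [pow_pos hr 2]) _)
              have h1p : (0:ℝ) < max ((1:ℝ)^e₁) ((4:ℝ)^e₁) :=
                lt_max_of_lt_left (by positivity)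
              positivity
          _ = K * (r * (1 - x + r^2) ^ e₁ * (1 + x + r^2) ^ e₂) := by
              rw [hKdef]; ring
      calc jacobiMeasure α β (jacobiBall x (2*r))
          ≤ ENNReal.ofReal (d₂ * (2*r * (1 - x + (2*r)^2) ^ e₁ * (1 + x + (2*r)^2) ^ e₂)) :=
            hup2
        _ ≤ ENNReal.ofReal (K * d₂ / d₁ * (d₁ * (r * (1 - x + r^2) ^ e₁ * (1 + x + r^2) ^ e₂))) := by
            apply ENNReal.ofReal_le_ofReal
            have heq : K * d₂ / d₁ * (d₁ * (r * (1 - x + r^2) ^ e₁ * (1 + x + r^2) ^ e₂))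
                = d₂ * (K * (r * (1 - x + r^2) ^ e₁ * (1 + x + r^2) ^ e₂)) := by
              field_simp
            rw [heq]
            exact mul_le_mul_of_nonneg_left hG2 hd₂.le
        _ = ENNReal.ofReal (K * d₂ / d₁)
            * ENNReal.ofReal (d₁ * (r * (1 - x + r^2) ^ e₁ * (1 + x + r^2) ^ e₂)) :=
            ENNReal.ofReal_mul (by positivity)
        _ ≤ ENNReal.ofReal (K * d₂ / d₁) * jacobiMeasure α β (jacobiBall x r) :=
            mul_le_mul_right hlow1 _
        _ ≤ C * jacobiMeasure α β (jacobiBall x r) := by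
            apply mul_le_mul_left
            rw [hCdef]
            exact self_le_add_right _ _
    · -- large radius
      set r' := min r π with hr'def
      have hr'pos : 0 < r' := lt_min hr hπ
      have hr'le : r' ≤ π := min_le_right _ _
      have hr'half : π/2 ≤ r' := le_min (by linarith) (by linarith)
      obtain ⟨hlow', -⟩ := hmain x hx r' hr'pos hr'le
      have hsubball : jacobiBall x r' ⊆ jacobiBall x r :=
        fun y hy => ⟨hy.1, lt_of_lt_of_le hy.2 (min_le_left _ _)⟩
      have hsq1 : (π/2)^2 ≤ r'^2 := pow_le_pow_left₀ (by positivity) hr'half 2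
      have hsq2 : r'^2 ≤ π^2 := pow_le_pow_left₀ hr'pos.le hr'le 2
      have heq2 : ((π:ℝ)/2)^2 = π^2/4 := by ring
      have hbA1 : π^2/4 ≤ 1 - x + r'^2 := by rw [← heq2]; linarith
      have hbA2 : 1 - x + r'^2 ≤ 2 + π^2 := by linarith [hx.1]
      have hbB1 : π^2/4 ≤ 1 + x + r'^2 := by rw [← heq2]; linarith
      have hbB2 : 1 + x + r'^2 ≤ 2 + π^2 := by linarith [hx.2]
      have hm1 : m₁ ≤ (1 - x + r'^2) ^ e₁ :=
        JacobiAux.rpow_min_le (by positivity) hbA1 hbA2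
      have hm2 : m₂ ≤ (1 + x + r'^2) ^ e₂ :=
        JacobiAux.rpow_min_le (by positivity) hbB1 hbB2
      have hGm : Gm ≤ r' * (1 - x + r'^2) ^ e₁ * (1 + x + r'^2) ^ e₂ := by
        have hstep : π/2 * (m₁ * m₂)
            ≤ r' * ((1 - x + r'^2) ^ e₁ * (1 + x + r'^2) ^ e₂) := by
          apply mul_le_mul hr'half
            (mul_le_mul hm1 hm2 hm₂p.le (Real.rpow_nonneg (by positivity) _))
            (by positivity) hr'pos.le
        calc Gm = π/2 * (m₁ * m₂) := hGmdef
          _ ≤ r' * ((1 - x + r'^2) ^ e₁ * (1 + x + r'^2) ^ e₂) := hstep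
          _ = r' * (1 - x + r'^2) ^ e₁ * (1 + x + r'^2) ^ e₂ := by ring
      have hle : e ≤ jacobiMeasure α β (jacobiBall x r) := by
        calc e ≤ ENNReal.ofReal (d₁ * (r' * (1 - x + r'^2) ^ e₁ * (1 + x + r'^2) ^ e₂)) :=
            ENNReal.ofReal_le_ofReal (mul_le_mul_of_nonneg_left hGm hd₁.le)
          _ ≤ jacobiMeasure α β (jacobiBall x r') := hlow'
          _ ≤ jacobiMeasure α β (jacobiBall x r) := measure_mono hsubball
      calc jacobiMeasure α β (jacobiBall x (2*r))
          ≤ T := measure_mono (fun y hy => hy.1)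
        _ = T * (e⁻¹ * e) := by rw [ENNReal.inv_mul_cancel hene0 henetop, mul_one]
        _ = (T * e⁻¹) * e := by rw [mul_assoc]
        _ ≤ (T * e⁻¹) * jacobiMeasure α β (jacobiBall x r) := mul_le_mul_right hle _
        _ ≤ C * jacobiMeasure α β (jacobiBall x r) := by
            apply mul_le_mul_left
            rw [hCdef]
            exact self_le_add_left _ _
end
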